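/- arXiv:math/0205206 — 3 statements merged into one kernel-verified Lean document; each statement's English description precedes it below -/
import Mathlib

section
/- For all n ≥ 1, the number of permutations of {1,...,n} avoiding the patterns 132, 2341, 3241, and 45123 equals 3·2^{n-1} - F_{n+3} + 1, where F_k is the k-th Fibonacci number. -/
/-- A function `π : Fin n → Fin n` contains the pattern `p : Fin k → ℕ` if there is a
strictly increasing choice of indices whose images under `π` have the same pairwise
order relations as the entries of `p`. -/
def Contains {n k : ℕ} (π : Fin n → Fin n) (p : Fin k → ℕ) : Prop :=
  ∃ f : Fin k → Fin n, StrictMono f ∧ ∀ i j, p i < p j ↔ π (f i) < π (f j)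

/-- `π` avoids the pattern `p`. -/
def Avoids {n k : ℕ} (π : Fin n → Fin n) (p : Fin k → ℕ) : Prop := ¬ Contains π p

/-- The set of permutations of `Fin n` avoiding the patterns 132, 2341 and 3241,
i.e. the 132-avoiding two-stack sortable permutations. -/
def TSS132 (n : ℕ) : Set (Fin n → Fin n) :=
  {π | Function.Bijective π ∧ Avoids π ![1,3,2] ∧ Avoids π ![2,3,4,1] ∧ Avoids π ![3,2,4,1]}



lemma fin3_mk2 (h : 2 < 3) : (⟨2, h⟩ : Fin 3) = 2 := rfl
lemma fin4_mk2 (h : 2 < 4) : (⟨2, h⟩ : Fin 4) = 2 := rfl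
lemma fin4_mk3 (h : 3 < 4) : (⟨3, h⟩ : Fin 4) = 3 := rfl
lemma fin5_mk2 (h : 2 < 5) : (⟨2, h⟩ : Fin 5) = 2 := rfl
lemma fin5_mk3 (h : 3 < 5) : (⟨3, h⟩ : Fin 5) = 3 := rfl
lemma fin5_mk4 (h : 4 < 5) : (⟨4, h⟩ : Fin 5) = 4 := rfl

lemma f3v2 : ((2:Fin 3):ℕ) = 2 := rfl
lemma f4v2 : ((2:Fin 4):ℕ) = 2 := rfl
lemma f4v3 : ((3:Fin 4):ℕ) = 3 := rfl
lemma f5v2 : ((2:Fin 5):ℕ) = 2 := rfl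
lemma f5v3 : ((3:Fin 5):ℕ) = 3 := rfl
lemma f5v4 : ((4:Fin 5):ℕ) = 4 := rfl

section chars
variable {n : ℕ} (π : Fin n → Fin n)

lemma c132 :
    Contains π ![1,3,2] ↔ ∃ a b c : Fin n, a < b ∧ b < c ∧ π a < π c ∧ π c < π b := by
  constructor
  · rintro ⟨f, hf, h⟩
    exact ⟨f 0, f 1, f 2, hf (by decide), hf (by decide),
      (h 0 2).1 (by decide), (h 2 1).1 (by decide)⟩
  · rintro ⟨a, b, c, hab, hbc, h1, h2⟩
    refine ⟨![a,b,c], ?_, ?_⟩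
    · intro i j hij
      fin_cases i <;> fin_cases j <;>
        simp only [Fin.mk_zero, Fin.mk_one, fin3_mk2, Matrix.cons_val_zero,
          Matrix.cons_val_one, Matrix.cons_val_two, Matrix.head_cons, Matrix.tail_cons,
          Fin.lt_def, Fin.val_zero, Fin.val_one, f3v2, f4v2, f4v3, f5v2, f5v3, f5v4] at hab hbc hij ⊢ <;> omega
    · intro i j
      fin_cases i <;> fin_cases j <;>
        simp only [Fin.mk_zero, Fin.mk_one, fin3_mk2, Matrix.cons_val_zero,
          Matrix.cons_val_one, Matrix.cons_val_two, Matrix.head_cons, Matrix.tail_cons,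
          Fin.lt_def, Fin.val_zero, Fin.val_one, f3v2, f4v2, f4v3, f5v2, f5v3, f5v4] at h1 h2 ⊢ <;> omega

lemma c123 :
    Contains π ![1,2,3] ↔ ∃ a b c : Fin n, a < b ∧ b < c ∧ π a < π b ∧ π b < π c := by
  constructor
  · rintro ⟨f, hf, h⟩
    exact ⟨f 0, f 1, f 2, hf (by decide), hf (by decide),
      (h 0 1).1 (by decide), (h 1 2).1 (by decide)⟩
  · rintro ⟨a, b, c, hab, hbc, h1, h2⟩
    refine ⟨![a,b,c], ?_, ?_⟩
    · intro i j hij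
      fin_cases i <;> fin_cases j <;>
        simp only [Fin.mk_zero, Fin.mk_one, fin3_mk2, Matrix.cons_val_zero,
          Matrix.cons_val_one, Matrix.cons_val_two, Matrix.head_cons, Matrix.tail_cons,
          Fin.lt_def, Fin.val_zero, Fin.val_one, f3v2, f4v2, f4v3, f5v2, f5v3, f5v4] at hab hbc hij ⊢ <;> omega
    · intro i j
      fin_cases i <;> fin_cases j <;>
        simp only [Fin.mk_zero, Fin.mk_one, fin3_mk2, Matrix.cons_val_zero,
          Matrix.cons_val_one, Matrix.cons_val_two, Matrix.head_cons, Matrix.tail_cons,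
          Fin.lt_def, Fin.val_zero, Fin.val_one, f3v2, f4v2, f4v3, f5v2, f5v3, f5v4] at h1 h2 ⊢ <;> omega

lemma c2341 :
    Contains π ![2,3,4,1] ↔ ∃ a b c d : Fin n, a < b ∧ b < c ∧ c < d ∧
      π d < π a ∧ π a < π b ∧ π b < π c := by
  constructor
  · rintro ⟨f, hf, h⟩
    exact ⟨f 0, f 1, f 2, f 3, hf (by decide), hf (by decide), hf (by decide),
      (h 3 0).1 (by decide), (h 0 1).1 (by decide), (h 1 2).1 (by decide)⟩
  · rintro ⟨a, b, c, d, hab, hbc, hcd, h1, h2, h3⟩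
    refine ⟨![a,b,c,d], ?_, ?_⟩
    · intro i j hij
      fin_cases i <;> fin_cases j <;>
        simp only [Fin.mk_zero, Fin.mk_one, fin4_mk2, fin4_mk3, Matrix.cons_val_zero,
          Matrix.cons_val_one, Matrix.cons_val_two, Matrix.cons_val_three,
          Matrix.head_cons, Matrix.tail_cons, Fin.lt_def, Fin.val_zero, Fin.val_one, f3v2, f4v2, f4v3, f5v2, f5v3, f5v4] at hab hbc hcd hij ⊢ <;> omega
    · intro i j
      fin_cases i <;> fin_cases j <;>
        simp only [Fin.mk_zero, Fin.mk_one, fin4_mk2, fin4_mk3, Matrix.cons_val_zero,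
          Matrix.cons_val_one, Matrix.cons_val_two, Matrix.cons_val_three,
          Matrix.head_cons, Matrix.tail_cons, Fin.lt_def, Fin.val_zero, Fin.val_one, f3v2, f4v2, f4v3, f5v2, f5v3, f5v4] at h1 h2 h3 ⊢ <;> omega

lemma c3241 :
    Contains π ![3,2,4,1] ↔ ∃ a b c d : Fin n, a < b ∧ b < c ∧ c < d ∧
      π d < π b ∧ π b < π a ∧ π a < π c := by
  constructor
  · rintro ⟨f, hf, h⟩
    exact ⟨f 0, f 1, f 2, f 3, hf (by decide), hf (by decide), hf (by decide),
      (h 3 1).1 (by decide), (h 1 0).1 (by decide), (h 0 2).1 (by decide)⟩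
  · rintro ⟨a, b, c, d, hab, hbc, hcd, h1, h2, h3⟩
    refine ⟨![a,b,c,d], ?_, ?_⟩
    · intro i j hij
      fin_cases i <;> fin_cases j <;>
        simp only [Fin.mk_zero, Fin.mk_one, fin4_mk2, fin4_mk3, Matrix.cons_val_zero,
          Matrix.cons_val_one, Matrix.cons_val_two, Matrix.cons_val_three,
          Matrix.head_cons, Matrix.tail_cons, Fin.lt_def, Fin.val_zero, Fin.val_one, f3v2, f4v2, f4v3, f5v2, f5v3, f5v4] at hab hbc hcd hij ⊢ <;> omega
    · intro i j
      fin_cases i <;> fin_cases j <;>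
        simp only [Fin.mk_zero, Fin.mk_one, fin4_mk2, fin4_mk3, Matrix.cons_val_zero,
          Matrix.cons_val_one, Matrix.cons_val_two, Matrix.cons_val_three,
          Matrix.head_cons, Matrix.tail_cons, Fin.lt_def, Fin.val_zero, Fin.val_one, f3v2, f4v2, f4v3, f5v2, f5v3, f5v4] at h1 h2 h3 ⊢ <;> omega

lemma c45123 :
    Contains π ![4,5,1,2,3] ↔ ∃ a b c d e : Fin n, a < b ∧ b < c ∧ c < d ∧ d < e ∧
      π c < π d ∧ π d < π e ∧ π e < π a ∧ π a < π b := by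
  constructor
  · rintro ⟨f, hf, h⟩
    exact ⟨f 0, f 1, f 2, f 3, f 4, hf (by decide), hf (by decide), hf (by decide),
      hf (by decide), (h 2 3).1 (by decide), (h 3 4).1 (by decide),
      (h 4 0).1 (by decide), (h 0 1).1 (by decide)⟩
  · rintro ⟨a, b, c, d, e, hab, hbc, hcd, hde, h1, h2, h3, h4⟩
    refine ⟨![a,b,c,d,e], ?_, ?_⟩
    · intro i j hij
      fin_cases i <;> fin_cases j <;>
        simp only [Fin.mk_zero, Fin.mk_one, fin5_mk2, fin5_mk3, fin5_mk4,
          Matrix.cons_val_zero, Matrix.cons_val_one, Matrix.cons_val_two,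
          Matrix.cons_val_three, Matrix.cons_val_four, Matrix.head_cons, Matrix.tail_cons,
          Fin.lt_def, Fin.val_zero, Fin.val_one, f3v2, f4v2, f4v3, f5v2, f5v3, f5v4] at hab hbc hcd hde hij ⊢ <;> omega
    · intro i j
      fin_cases i <;> fin_cases j <;>
        simp only [Fin.mk_zero, Fin.mk_one, fin5_mk2, fin5_mk3, fin5_mk4,
          Matrix.cons_val_zero, Matrix.cons_val_one, Matrix.cons_val_two,
          Matrix.cons_val_three, Matrix.cons_val_four, Matrix.head_cons, Matrix.tail_cons,
          Fin.lt_def, Fin.val_zero, Fin.val_one, f3v2, f4v2, f4v3, f5v2, f5v3, f5v4] at h1 h2 h3 h4 ⊢ <;> omega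

end chars

lemma contains_of_embed {m n k : ℕ} {σ : Fin m → Fin m} {π : Fin n → Fin n}
    (e : Fin m → Fin n) (he : StrictMono e)
    (hord : ∀ i j, σ i < σ j ↔ π (e i) < π (e j)) (p : Fin k → ℕ) :
    Contains σ p → Contains π p := by
  rintro ⟨f, hf, h⟩
  exact ⟨e ∘ f, he.comp hf, fun i j => (h i j).trans (hord _ _)⟩

lemma avoids_small {n k : ℕ} (π : Fin n → Fin n) (p : Fin k → ℕ) (h : n < k) :
    Avoids π p := by
  rintro ⟨f, hf, -⟩
  have := Fintype.card_le_of_injective f hf.injective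
  simp only [Fintype.card_fin] at this
  omega

def Sset (n : ℕ) : Set (Fin n → Fin n) :=
  {π | Function.Bijective π ∧ Avoids π ![1,3,2] ∧ Avoids π ![2,3,4,1] ∧
    Avoids π ![3,2,4,1] ∧ Avoids π ![4,5,1,2,3]}

def Tset (m : ℕ) : Set (Fin m → Fin m) :=
  {σ | Function.Bijective σ ∧ Avoids σ ![1,2,3] ∧ Avoids σ ![1,3,2] ∧ Avoids σ ![3,2,4,1]}


def appendMax {n : ℕ} (σ : Fin n → Fin n) : Fin (n+1) → Fin (n+1) :=
  fun i => if h : (i:ℕ) < n then Fin.castLE (by omega) (σ ⟨i, h⟩) else Fin.last n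

lemma appendMax_val_lt {n} (σ : Fin n → Fin n) {i : Fin (n+1)} (h : (i:ℕ) < n) :
    (appendMax σ i : ℕ) = σ ⟨i, h⟩ := by simp [appendMax, h]

lemma appendMax_val_last {n} (σ : Fin n → Fin n) {i : Fin (n+1)} (h : ¬ (i:ℕ) < n) :
    (appendMax σ i : ℕ) = n := by simp [appendMax, h, Fin.last]

def prependMax {n : ℕ} (σ : Fin n → Fin n) : Fin (n+1) → Fin (n+1) :=
  fun i => if h : (i:ℕ) = 0 then Fin.last n
    else Fin.castLE (by omega) (σ ⟨(i:ℕ)-1, by have := i.isLt; omega⟩)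

lemma prependMax_val_zero {n} (σ : Fin n → Fin n) {i : Fin (n+1)} (h : (i:ℕ) = 0) :
    (prependMax σ i : ℕ) = n := by simp [prependMax, h, Fin.last]

lemma prependMax_val_pos {n} (σ : Fin n → Fin n) {i : Fin (n+1)} (h : (i:ℕ) ≠ 0)
    (h' : (i:ℕ) - 1 < n) : (prependMax σ i : ℕ) = σ ⟨(i:ℕ)-1, h'⟩ := by
  simp [prependMax, h]

def prepend2 {m : ℕ} (σ : Fin m → Fin m) : Fin (m+2) → Fin (m+2) :=
  fun i => if h0 : (i:ℕ) = 0 then ⟨m, by omega⟩ else if h1 : (i:ℕ) = 1 then ⟨m+1, by omega⟩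
    else Fin.castLE (by omega) (σ ⟨(i:ℕ)-2, by have := i.isLt; omega⟩)

lemma prepend2_val0 {m} (σ : Fin m → Fin m) {i : Fin (m+2)} (h : (i:ℕ) = 0) :
    (prepend2 σ i : ℕ) = m := by simp [prepend2, h]

lemma prepend2_val1 {m} (σ : Fin m → Fin m) {i : Fin (m+2)} (h : (i:ℕ) = 1) :
    (prepend2 σ i : ℕ) = m + 1 := by simp [prepend2, h]

lemma prepend2_valtail {m} (σ : Fin m → Fin m) {i : Fin (m+2)} (h : 2 ≤ (i:ℕ))
    (h' : (i:ℕ) - 2 < m) : (prepend2 σ i : ℕ) = σ ⟨(i:ℕ)-2, h'⟩ := by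
  have h0 : (i:ℕ) ≠ 0 := by omega
  have h1 : (i:ℕ) ≠ 1 := by omega
  simp [prepend2, h0, h1]

def decMax (m : ℕ) : Fin m → Fin m :=
  fun i => if (i:ℕ) = m - 1 then i else ⟨m - 2 - (i:ℕ), by have := i.isLt; omega⟩

lemma decMax_val_last {m} {i : Fin m} (h : (i:ℕ) = m - 1) : (decMax m i : ℕ) = m - 1 := by
  simp [decMax, h]

lemma decMax_val {m} {i : Fin m} (h : (i:ℕ) ≠ m - 1) : (decMax m i : ℕ) = m - 2 - (i:ℕ) := by
  simp [decMax, h]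

section avoidance
variable {n : ℕ} {σ : Fin n → Fin n}

-- appendMax lemmas
lemma aM_132 (hσ : Avoids σ ![1,3,2]) : Avoids (appendMax σ) ![1,3,2] := by
  rw [Avoids, c132]
  rintro ⟨a, b, c, hab, hbc, h1, h2⟩
  rw [Fin.lt_def] at hab hbc h1 h2
  by_cases hc : (c:ℕ) < n
  · have ha : (a:ℕ) < n := by omega
    have hb : (b:ℕ) < n := by omega
    rw [appendMax_val_lt σ ha, appendMax_val_lt σ hc] at h1
    rw [appendMax_val_lt σ hc, appendMax_val_lt σ hb] at h2
    exact hσ ((c132 σ).2 ⟨⟨a,ha⟩, ⟨b,hb⟩, ⟨c,hc⟩, Fin.mk_lt_mk.2 hab, Fin.mk_lt_mk.2 hbc,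
      Fin.lt_def.2 h1, Fin.lt_def.2 h2⟩)
  · rw [appendMax_val_last σ hc] at h2
    have := (appendMax σ b).isLt
    omega

lemma aM_2341 (hσ : Avoids σ ![2,3,4,1]) : Avoids (appendMax σ) ![2,3,4,1] := by
  rw [Avoids, c2341]
  rintro ⟨a, b, c, d, hab, hbc, hcd, h1, h2, h3⟩
  rw [Fin.lt_def] at hab hbc hcd h1 h2 h3
  by_cases hd : (d:ℕ) < n
  · have ha : (a:ℕ) < n := by omega
    have hb : (b:ℕ) < n := by omega
    have hc : (c:ℕ) < n := by omega
    rw [appendMax_val_lt σ hd, appendMax_val_lt σ ha] at h1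
    rw [appendMax_val_lt σ ha, appendMax_val_lt σ hb] at h2
    rw [appendMax_val_lt σ hb, appendMax_val_lt σ hc] at h3
    exact hσ ((c2341 σ).2 ⟨⟨a,ha⟩, ⟨b,hb⟩, ⟨c,hc⟩, ⟨d,hd⟩, Fin.mk_lt_mk.2 hab,
      Fin.mk_lt_mk.2 hbc, Fin.mk_lt_mk.2 hcd, Fin.lt_def.2 h1, Fin.lt_def.2 h2,
      Fin.lt_def.2 h3⟩)
  · rw [appendMax_val_last σ hd] at h1
    have := (appendMax σ a).isLt
    omega

lemma aM_3241 (hσ : Avoids σ ![3,2,4,1]) : Avoids (appendMax σ) ![3,2,4,1] := by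
  rw [Avoids, c3241]
  rintro ⟨a, b, c, d, hab, hbc, hcd, h1, h2, h3⟩
  rw [Fin.lt_def] at hab hbc hcd h1 h2 h3
  by_cases hd : (d:ℕ) < n
  · have ha : (a:ℕ) < n := by omega
    have hb : (b:ℕ) < n := by omega
    have hc : (c:ℕ) < n := by omega
    rw [appendMax_val_lt σ hd, appendMax_val_lt σ hb] at h1
    rw [appendMax_val_lt σ hb, appendMax_val_lt σ ha] at h2
    rw [appendMax_val_lt σ ha, appendMax_val_lt σ hc] at h3
    exact hσ ((c3241 σ).2 ⟨⟨a,ha⟩, ⟨b,hb⟩, ⟨c,hc⟩, ⟨d,hd⟩, Fin.mk_lt_mk.2 hab,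
      Fin.mk_lt_mk.2 hbc, Fin.mk_lt_mk.2 hcd, Fin.lt_def.2 h1, Fin.lt_def.2 h2,
      Fin.lt_def.2 h3⟩)
  · rw [appendMax_val_last σ hd] at h1
    have := (appendMax σ b).isLt
    omega

lemma aM_45123 (hσ : Avoids σ ![4,5,1,2,3]) : Avoids (appendMax σ) ![4,5,1,2,3] := by
  rw [Avoids, c45123]
  rintro ⟨a, b, c, d, e, hab, hbc, hcd, hde, h1, h2, h3, h4⟩
  rw [Fin.lt_def] at hab hbc hcd hde h1 h2 h3 h4
  by_cases he : (e:ℕ) < n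
  · have ha : (a:ℕ) < n := by omega
    have hb : (b:ℕ) < n := by omega
    have hc : (c:ℕ) < n := by omega
    have hd : (d:ℕ) < n := by omega
    rw [appendMax_val_lt σ hc, appendMax_val_lt σ hd] at h1
    rw [appendMax_val_lt σ hd, appendMax_val_lt σ he] at h2
    rw [appendMax_val_lt σ he, appendMax_val_lt σ ha] at h3
    rw [appendMax_val_lt σ ha, appendMax_val_lt σ hb] at h4
    exact hσ ((c45123 σ).2 ⟨⟨a,ha⟩, ⟨b,hb⟩, ⟨c,hc⟩, ⟨d,hd⟩, ⟨e,he⟩, Fin.mk_lt_mk.2 hab,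
      Fin.mk_lt_mk.2 hbc, Fin.mk_lt_mk.2 hcd, Fin.mk_lt_mk.2 hde, Fin.lt_def.2 h1,
      Fin.lt_def.2 h2, Fin.lt_def.2 h3, Fin.lt_def.2 h4⟩)
  · rw [appendMax_val_last σ he] at h3
    have := (appendMax σ a).isLt
    omega

-- prependMax lemmas: any occurrence must have all points ≥ 1 since the first pattern
-- letter is never the max of the pattern.
lemma pM_132 (hσ : Avoids σ ![1,3,2]) : Avoids (prependMax σ) ![1,3,2] := by
  rw [Avoids, c132]
  rintro ⟨a, b, c, hab, hbc, h1, h2⟩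
  rw [Fin.lt_def] at hab hbc h1 h2
  by_cases ha : (a:ℕ) = 0
  · rw [prependMax_val_zero σ ha] at h1
    have := (prependMax σ c).isLt
    omega
  · have ha' : (a:ℕ) - 1 < n := by have := a.isLt; omega
    have hb' : (b:ℕ) - 1 < n := by have := b.isLt; omega
    have hc' : (c:ℕ) - 1 < n := by have := c.isLt; omega
    rw [prependMax_val_pos σ ha ha', prependMax_val_pos σ (by omega) hc'] at h1
    rw [prependMax_val_pos σ (by omega) hc', prependMax_val_pos σ (by omega) hb'] at h2
    exact hσ ((c132 σ).2 ⟨⟨(a:ℕ)-1,ha'⟩, ⟨(b:ℕ)-1,hb'⟩, ⟨(c:ℕ)-1,hc'⟩,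
      Fin.mk_lt_mk.2 (by omega), Fin.mk_lt_mk.2 (by omega), Fin.lt_def.2 h1, Fin.lt_def.2 h2⟩)

lemma pM_123 (hσ : Avoids σ ![1,2,3]) : Avoids (prependMax σ) ![1,2,3] := by
  rw [Avoids, c123]
  rintro ⟨a, b, c, hab, hbc, h1, h2⟩
  rw [Fin.lt_def] at hab hbc h1 h2
  by_cases ha : (a:ℕ) = 0
  · rw [prependMax_val_zero σ ha] at h1
    have := (prependMax σ b).isLt
    omega
  · have ha' : (a:ℕ) - 1 < n := by have := a.isLt; omega
    have hb' : (b:ℕ) - 1 < n := by have := b.isLt; omega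
    have hc' : (c:ℕ) - 1 < n := by have := c.isLt; omega
    rw [prependMax_val_pos σ ha ha', prependMax_val_pos σ (by omega) hb'] at h1
    rw [prependMax_val_pos σ (by omega) hb', prependMax_val_pos σ (by omega) hc'] at h2
    exact hσ ((c123 σ).2 ⟨⟨(a:ℕ)-1,ha'⟩, ⟨(b:ℕ)-1,hb'⟩, ⟨(c:ℕ)-1,hc'⟩,
      Fin.mk_lt_mk.2 (by omega), Fin.mk_lt_mk.2 (by omega), Fin.lt_def.2 h1, Fin.lt_def.2 h2⟩)

lemma pM_2341 (hσ : Avoids σ ![2,3,4,1]) : Avoids (prependMax σ) ![2,3,4,1] := by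
  rw [Avoids, c2341]
  rintro ⟨a, b, c, d, hab, hbc, hcd, h1, h2, h3⟩
  rw [Fin.lt_def] at hab hbc hcd h1 h2 h3
  by_cases ha : (a:ℕ) = 0
  · rw [prependMax_val_zero σ ha] at h2
    have := (prependMax σ b).isLt
    omega
  · have ha' : (a:ℕ) - 1 < n := by have := a.isLt; omega
    have hb' : (b:ℕ) - 1 < n := by have := b.isLt; omega
    have hc' : (c:ℕ) - 1 < n := by have := c.isLt; omega
    have hd' : (d:ℕ) - 1 < n := by have := d.isLt; omega
    rw [prependMax_val_pos σ (by omega) hd', prependMax_val_pos σ ha ha'] at h1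
    rw [prependMax_val_pos σ ha ha', prependMax_val_pos σ (by omega) hb'] at h2
    rw [prependMax_val_pos σ (by omega) hb', prependMax_val_pos σ (by omega) hc'] at h3
    exact hσ ((c2341 σ).2 ⟨⟨(a:ℕ)-1,ha'⟩, ⟨(b:ℕ)-1,hb'⟩, ⟨(c:ℕ)-1,hc'⟩, ⟨(d:ℕ)-1,hd'⟩,
      Fin.mk_lt_mk.2 (by omega), Fin.mk_lt_mk.2 (by omega), Fin.mk_lt_mk.2 (by omega),
      Fin.lt_def.2 h1, Fin.lt_def.2 h2, Fin.lt_def.2 h3⟩)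

lemma pM_3241 (hσ : Avoids σ ![3,2,4,1]) : Avoids (prependMax σ) ![3,2,4,1] := by
  rw [Avoids, c3241]
  rintro ⟨a, b, c, d, hab, hbc, hcd, h1, h2, h3⟩
  rw [Fin.lt_def] at hab hbc hcd h1 h2 h3
  by_cases ha : (a:ℕ) = 0
  · rw [prependMax_val_zero σ ha] at h3
    have := (prependMax σ c).isLt
    omega
  · have ha' : (a:ℕ) - 1 < n := by have := a.isLt; omega
    have hb' : (b:ℕ) - 1 < n := by have := b.isLt; omega
    have hc' : (c:ℕ) - 1 < n := by have := c.isLt; omega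
    have hd' : (d:ℕ) - 1 < n := by have := d.isLt; omega
    rw [prependMax_val_pos σ (by omega) hd', prependMax_val_pos σ (by omega) hb'] at h1
    rw [prependMax_val_pos σ (by omega) hb', prependMax_val_pos σ ha ha'] at h2
    rw [prependMax_val_pos σ ha ha', prependMax_val_pos σ (by omega) hc'] at h3
    exact hσ ((c3241 σ).2 ⟨⟨(a:ℕ)-1,ha'⟩, ⟨(b:ℕ)-1,hb'⟩, ⟨(c:ℕ)-1,hc'⟩, ⟨(d:ℕ)-1,hd'⟩,
      Fin.mk_lt_mk.2 (by omega), Fin.mk_lt_mk.2 (by omega), Fin.mk_lt_mk.2 (by omega),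
      Fin.lt_def.2 h1, Fin.lt_def.2 h2, Fin.lt_def.2 h3⟩)

lemma pM_45123 (hσ : Avoids σ ![4,5,1,2,3]) : Avoids (prependMax σ) ![4,5,1,2,3] := by
  rw [Avoids, c45123]
  rintro ⟨a, b, c, d, e, hab, hbc, hcd, hde, h1, h2, h3, h4⟩
  rw [Fin.lt_def] at hab hbc hcd hde h1 h2 h3 h4
  by_cases ha : (a:ℕ) = 0
  · rw [prependMax_val_zero σ ha] at h4
    have := (prependMax σ b).isLt
    omega
  · have ha' : (a:ℕ) - 1 < n := by have := a.isLt; omega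
    have hb' : (b:ℕ) - 1 < n := by have := b.isLt; omega
    have hc' : (c:ℕ) - 1 < n := by have := c.isLt; omega
    have hd' : (d:ℕ) - 1 < n := by have := d.isLt; omega
    have he' : (e:ℕ) - 1 < n := by have := e.isLt; omega
    rw [prependMax_val_pos σ (by omega) hc', prependMax_val_pos σ (by omega) hd'] at h1
    rw [prependMax_val_pos σ (by omega) hd', prependMax_val_pos σ (by omega) he'] at h2
    rw [prependMax_val_pos σ (by omega) he', prependMax_val_pos σ ha ha'] at h3
    rw [prependMax_val_pos σ ha ha', prependMax_val_pos σ (by omega) hb'] at h4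
    exact hσ ((c45123 σ).2 ⟨⟨(a:ℕ)-1,ha'⟩, ⟨(b:ℕ)-1,hb'⟩, ⟨(c:ℕ)-1,hc'⟩, ⟨(d:ℕ)-1,hd'⟩,
      ⟨(e:ℕ)-1,he'⟩, Fin.mk_lt_mk.2 (by omega), Fin.mk_lt_mk.2 (by omega),
      Fin.mk_lt_mk.2 (by omega), Fin.mk_lt_mk.2 (by omega),
      Fin.lt_def.2 h1, Fin.lt_def.2 h2, Fin.lt_def.2 h3, Fin.lt_def.2 h4⟩)

end avoidance

section p2avoid
variable {m : ℕ} {σ : Fin m → Fin m}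

lemma p2_tail_lt (i : Fin (m+2)) (h : 2 ≤ (i:ℕ)) : (prepend2 σ i : ℕ) < m := by
  have h' : (i:ℕ) - 2 < m := by have := i.isLt; omega
  rw [prepend2_valtail σ h h']
  exact (σ _).isLt

lemma p2_132 (hσ : Avoids σ ![1,3,2]) : Avoids (prepend2 σ) ![1,3,2] := by
  rw [Avoids, c132]
  rintro ⟨a, b, c, hab, hbc, h1, h2⟩
  rw [Fin.lt_def] at hab hbc h1 h2
  have hc2 : 2 ≤ (c:ℕ) := by omega
  by_cases ha : (a:ℕ) ≤ 1
  · -- π a ∈ {m, m+1}, but π a < π c < m : contradiction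
    have hac : m ≤ (prepend2 σ a : ℕ) := by
      rcases Nat.eq_or_lt_of_le ha with h' | h'
      · rw [prepend2_val1 σ h']; omega
      · rw [prepend2_val0 σ (by omega)]
    have := p2_tail_lt (σ := σ) c hc2
    omega
  · have ha2 : 2 ≤ (a:ℕ) := by omega
    have hb2 : 2 ≤ (b:ℕ) := by omega
    have ha' : (a:ℕ) - 2 < m := by have := a.isLt; omega
    have hb' : (b:ℕ) - 2 < m := by have := b.isLt; omega
    have hc' : (c:ℕ) - 2 < m := by have := c.isLt; omega
    rw [prepend2_valtail σ ha2 ha', prepend2_valtail σ hc2 hc'] at h1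
    rw [prepend2_valtail σ hc2 hc', prepend2_valtail σ hb2 hb'] at h2
    exact hσ ((c132 σ).2 ⟨⟨(a:ℕ)-2,ha'⟩, ⟨(b:ℕ)-2,hb'⟩, ⟨(c:ℕ)-2,hc'⟩,
      Fin.mk_lt_mk.2 (by omega), Fin.mk_lt_mk.2 (by omega), Fin.lt_def.2 h1, Fin.lt_def.2 h2⟩)

lemma p2_123 (hσ : Avoids σ ![1,2,3]) : Avoids (prepend2 σ) ![1,2,3] := by
  rw [Avoids, c123]
  rintro ⟨a, b, c, hab, hbc, h1, h2⟩
  rw [Fin.lt_def] at hab hbc h1 h2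
  have hc2 : 2 ≤ (c:ℕ) := by omega
  have hc' : (c:ℕ) - 2 < m := by have := c.isLt; omega
  have hcm := p2_tail_lt (σ := σ) c hc2
  by_cases ha : (a:ℕ) ≤ 1
  · -- then π b > π a ≥ m, so b ≤ 1 too or π b < m contradiction
    have ham : m ≤ (prepend2 σ a : ℕ) := by
      rcases Nat.eq_or_lt_of_le ha with h' | h'
      · rw [prepend2_val1 σ h']; omega
      · rw [prepend2_val0 σ (by omega)]
    by_cases hb : (b:ℕ) ≤ 1
    · -- π b ≤ m+1, π b < π c < m : contradiction
      omega
    · have := p2_tail_lt (σ := σ) b (by omega)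
      omega
  · have ha2 : 2 ≤ (a:ℕ) := by omega
    have hb2 : 2 ≤ (b:ℕ) := by omega
    have ha' : (a:ℕ) - 2 < m := by have := a.isLt; omega
    have hb' : (b:ℕ) - 2 < m := by have := b.isLt; omega
    rw [prepend2_valtail σ ha2 ha', prepend2_valtail σ hb2 hb'] at h1
    rw [prepend2_valtail σ hb2 hb', prepend2_valtail σ hc2 hc'] at h2
    exact hσ ((c123 σ).2 ⟨⟨(a:ℕ)-2,ha'⟩, ⟨(b:ℕ)-2,hb'⟩, ⟨(c:ℕ)-2,hc'⟩,
      Fin.mk_lt_mk.2 (by omega), Fin.mk_lt_mk.2 (by omega), Fin.lt_def.2 h1, Fin.lt_def.2 h2⟩)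

lemma p2_2341 (hσ : Avoids σ ![1,2,3]) : Avoids (prepend2 σ) ![2,3,4,1] := by
  rw [Avoids, c2341]
  rintro ⟨a, b, c, d, hab, hbc, hcd, h1, h2, h3⟩
  rw [Fin.lt_def] at hab hbc hcd h1 h2 h3
  have hc2 : 2 ≤ (c:ℕ) := by omega
  have hc' : (c:ℕ) - 2 < m := by have := c.isLt; omega
  have hcm := p2_tail_lt (σ := σ) c hc2
  by_cases ha : (a:ℕ) ≤ 1
  · have ham : m ≤ (prepend2 σ a : ℕ) := by
      rcases Nat.eq_or_lt_of_le ha with h' | h'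
      · rw [prepend2_val1 σ h']; omega
      · rw [prepend2_val0 σ (by omega)]
    by_cases hb : (b:ℕ) ≤ 1
    · omega
    · have := p2_tail_lt (σ := σ) b (by omega)
      omega
  · have ha2 : 2 ≤ (a:ℕ) := by omega
    have hb2 : 2 ≤ (b:ℕ) := by omega
    have ha' : (a:ℕ) - 2 < m := by have := a.isLt; omega
    have hb' : (b:ℕ) - 2 < m := by have := b.isLt; omega
    rw [prepend2_valtail σ ha2 ha', prepend2_valtail σ hb2 hb'] at h2
    rw [prepend2_valtail σ hb2 hb', prepend2_valtail σ hc2 hc'] at h3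
    exact hσ ((c123 σ).2 ⟨⟨(a:ℕ)-2,ha'⟩, ⟨(b:ℕ)-2,hb'⟩, ⟨(c:ℕ)-2,hc'⟩,
      Fin.mk_lt_mk.2 (by omega), Fin.mk_lt_mk.2 (by omega), Fin.lt_def.2 h2, Fin.lt_def.2 h3⟩)

lemma p2_3241 (hσ : Avoids σ ![3,2,4,1]) : Avoids (prepend2 σ) ![3,2,4,1] := by
  rw [Avoids, c3241]
  rintro ⟨a, b, c, d, hab, hbc, hcd, h1, h2, h3⟩
  rw [Fin.lt_def] at hab hbc hcd h1 h2 h3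
  have hc2 : 2 ≤ (c:ℕ) := by omega
  have hc' : (c:ℕ) - 2 < m := by have := c.isLt; omega
  have hcm := p2_tail_lt (σ := σ) c hc2
  by_cases ha : (a:ℕ) ≤ 1
  · -- π a ≥ m but π a < π c < m
    have ham : m ≤ (prepend2 σ a : ℕ) := by
      rcases Nat.eq_or_lt_of_le ha with h' | h'
      · rw [prepend2_val1 σ h']; omega
      · rw [prepend2_val0 σ (by omega)]
    omega
  · have ha2 : 2 ≤ (a:ℕ) := by omega
    have hb2 : 2 ≤ (b:ℕ) := by omega
    have hd2 : 2 ≤ (d:ℕ) := by omega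
    have ha' : (a:ℕ) - 2 < m := by have := a.isLt; omega
    have hb' : (b:ℕ) - 2 < m := by have := b.isLt; omega
    have hd' : (d:ℕ) - 2 < m := by have := d.isLt; omega
    rw [prepend2_valtail σ hd2 hd', prepend2_valtail σ hb2 hb'] at h1
    rw [prepend2_valtail σ hb2 hb', prepend2_valtail σ ha2 ha'] at h2
    rw [prepend2_valtail σ ha2 ha', prepend2_valtail σ hc2 hc'] at h3
    exact hσ ((c3241 σ).2 ⟨⟨(a:ℕ)-2,ha'⟩, ⟨(b:ℕ)-2,hb'⟩, ⟨(c:ℕ)-2,hc'⟩, ⟨(d:ℕ)-2,hd'⟩,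
      Fin.mk_lt_mk.2 (by omega), Fin.mk_lt_mk.2 (by omega), Fin.mk_lt_mk.2 (by omega),
      Fin.lt_def.2 h1, Fin.lt_def.2 h2, Fin.lt_def.2 h3⟩)

lemma p2_45123 (hσ : Avoids σ ![1,2,3]) : Avoids (prepend2 σ) ![4,5,1,2,3] := by
  rw [Avoids, c45123]
  rintro ⟨a, b, c, d, e, hab, hbc, hcd, hde, h1, h2, h3, h4⟩
  rw [Fin.lt_def] at hab hbc hcd hde h1 h2 h3 h4
  -- c, d, e are at positions with val ≥ 2 unless a,b small... need c ≥ 2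
  by_cases hc : 2 ≤ (c:ℕ)
  · have hd2 : 2 ≤ (d:ℕ) := by omega
    have he2 : 2 ≤ (e:ℕ) := by omega
    have hc' : (c:ℕ) - 2 < m := by have := c.isLt; omega
    have hd' : (d:ℕ) - 2 < m := by have := d.isLt; omega
    have he' : (e:ℕ) - 2 < m := by have := e.isLt; omega
    rw [prepend2_valtail σ hc hc', prepend2_valtail σ hd2 hd'] at h1
    rw [prepend2_valtail σ hd2 hd', prepend2_valtail σ he2 he'] at h2
    exact hσ ((c123 σ).2 ⟨⟨(c:ℕ)-2,hc'⟩, ⟨(d:ℕ)-2,hd'⟩, ⟨(e:ℕ)-2,he'⟩,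
      Fin.mk_lt_mk.2 (by omega), Fin.mk_lt_mk.2 (by omega), Fin.lt_def.2 h1, Fin.lt_def.2 h2⟩)
  · omega

end p2avoid

lemma appendMax_inj {n} : Function.Injective (@appendMax n) := by
  intro σ τ h
  funext j
  have := congrFun h (Fin.castLE (by omega) j)
  have hj : ((Fin.castLE (by omega : n ≤ n+1) j : Fin (n+1)) : ℕ) < n := j.isLt
  have h1 := appendMax_val_lt σ hj
  have h2 := appendMax_val_lt τ hj
  apply Fin.ext
  rw [← show (⟨((Fin.castLE (by omega : n ≤ n+1) j : Fin (n+1)) : ℕ), hj⟩ : Fin n) = j from rfl]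
  rw [← h1, ← h2, this]

lemma appendMax_bij {n} {σ : Fin n → Fin n} (hσ : Function.Bijective σ) :
    Function.Bijective (appendMax σ) := by
  rw [Fintype.bijective_iff_injective_and_card]
  refine ⟨?_, rfl⟩
  intro i j hij
  rcases Nat.lt_or_ge (i:ℕ) n with hi | hi <;> rcases Nat.lt_or_ge (j:ℕ) n with hj | hj
  · have := congrArg Fin.val hij
    rw [appendMax_val_lt σ hi, appendMax_val_lt σ hj] at this
    have h2 := hσ.injective (Fin.ext this : σ ⟨i,hi⟩ = σ ⟨j,hj⟩)
    have h3 := congrArg Fin.val h2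
    exact Fin.ext (by simpa using h3)
  · have := congrArg Fin.val hij
    rw [appendMax_val_lt σ hi, appendMax_val_last σ (by omega)] at this
    exact absurd this (by have := (σ ⟨i,hi⟩).isLt; omega)
  · have := congrArg Fin.val hij
    rw [appendMax_val_last σ (by omega), appendMax_val_lt σ hj] at this
    exact absurd this.symm (by have := (σ ⟨j,hj⟩).isLt; omega)
  · exact Fin.ext (by have := i.isLt; have := j.isLt; omega)

lemma prependMax_bij {n} {σ : Fin n → Fin n} (hσ : Function.Bijective σ) :
    Function.Bijective (prependMax σ) := by
  rw [Fintype.bijective_iff_injective_and_card]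
  refine ⟨?_, rfl⟩
  intro i j hij
  have hv := congrArg Fin.val hij
  by_cases hi : (i:ℕ) = 0 <;> by_cases hj : (j:ℕ) = 0
  · exact Fin.ext (by omega)
  · rw [prependMax_val_zero σ hi, prependMax_val_pos σ hj (by have := j.isLt; omega)] at hv
    exact absurd hv.symm (Nat.ne_of_lt (σ _).isLt)
  · rw [prependMax_val_pos σ hi (by have := i.isLt; omega), prependMax_val_zero σ hj] at hv
    exact absurd hv (Nat.ne_of_lt (σ _).isLt)
  · rw [prependMax_val_pos σ hi (by have := i.isLt; omega),
      prependMax_val_pos σ hj (by have := j.isLt; omega)] at hv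
    have := congrArg Fin.val (hσ.injective (Fin.ext hv))
    simp only at this
    exact Fin.ext (by omega)

lemma prepend2_bij {m} {σ : Fin m → Fin m} (hσ : Function.Bijective σ) :
    Function.Bijective (prepend2 σ) := by
  rw [Fintype.bijective_iff_injective_and_card]
  refine ⟨?_, rfl⟩
  intro i j hij
  have hv := congrArg Fin.val hij
  have hi2 := i.isLt
  have hj2 := j.isLt
  rcases show (i:ℕ) = 0 ∨ (i:ℕ) = 1 ∨ 2 ≤ (i:ℕ) by omega with hi | hi | hi <;>
    rcases show (j:ℕ) = 0 ∨ (j:ℕ) = 1 ∨ 2 ≤ (j:ℕ) by omega with hj | hj | hj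
  · exact Fin.ext (by omega)
  · rw [prepend2_val0 σ hi, prepend2_val1 σ hj] at hv; omega
  · have hj' : (j:ℕ) - 2 < m := by omega
    rw [prepend2_val0 σ hi, prepend2_valtail σ hj hj'] at hv
    have := (σ (⟨(j:ℕ)-2, hj'⟩ : Fin m)).isLt
    omega
  · rw [prepend2_val1 σ hi, prepend2_val0 σ hj] at hv; omega
  · exact Fin.ext (by omega)
  · have hj' : (j:ℕ) - 2 < m := by omega
    rw [prepend2_val1 σ hi, prepend2_valtail σ hj hj'] at hv
    have := (σ (⟨(j:ℕ)-2, hj'⟩ : Fin m)).isLt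
    omega
  · have hi' : (i:ℕ) - 2 < m := by omega
    rw [prepend2_valtail σ hi hi', prepend2_val0 σ hj] at hv
    have := (σ (⟨(i:ℕ)-2, hi'⟩ : Fin m)).isLt
    omega
  · have hi' : (i:ℕ) - 2 < m := by omega
    rw [prepend2_valtail σ hi hi', prepend2_val1 σ hj] at hv
    have := (σ (⟨(i:ℕ)-2, hi'⟩ : Fin m)).isLt
    omega
  · rw [prepend2_valtail σ hi (by omega), prepend2_valtail σ hj (by omega)] at hv
    have := congrArg Fin.val (hσ.injective (Fin.ext hv))
    simp only at this
    exact Fin.ext (by omega)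

lemma decMax_bij (m : ℕ) : Function.Bijective (decMax m) := by
  rw [Fintype.bijective_iff_injective_and_card]
  refine ⟨?_, rfl⟩
  intro i j hij
  have hv := congrArg Fin.val hij
  have hi2 := i.isLt
  have hj2 := j.isLt
  by_cases hi : (i:ℕ) = m - 1 <;> by_cases hj : (j:ℕ) = m - 1
  · exact Fin.ext (by omega)
  · rw [decMax_val_last hi, decMax_val hj] at hv; omega
  · rw [decMax_val hi, decMax_val_last hj] at hv; omega
  · rw [decMax_val hi, decMax_val hj] at hv; exact Fin.ext (by omega)

lemma exists_restrict_last {n} {π : Fin (n+1) → Fin (n+1)} (hbij : Function.Bijective π)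
    (hlast : π (Fin.last n) = Fin.last n) :
    ∃ σ : Fin n → Fin n, Function.Bijective σ ∧ appendMax σ = π ∧
      ∀ i j : Fin n, σ i < σ j ↔ π (Fin.castLE (by omega) i) < π (Fin.castLE (by omega) j) := by
  have key : ∀ j : Fin n, (π (Fin.castLE (by omega) j) : ℕ) < n := by
    intro j
    have h1 : (Fin.castLE (by omega : n ≤ n+1) j) ≠ Fin.last n := by
      intro h
      have := congrArg Fin.val h
      simp [Fin.last] at this
      exact absurd this (Nat.ne_of_lt j.isLt)
    have h2 : π (Fin.castLE (by omega) j) ≠ Fin.last n := fun h =>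
      h1 (hbij.injective (h.trans hlast.symm))
    have := (π (Fin.castLE (by omega) j)).isLt
    have h3 : (π (Fin.castLE (by omega) j) : ℕ) ≠ n := fun h => h2 (Fin.ext (by simp [Fin.last, h]))
    omega
  refine ⟨fun j => ⟨(π (Fin.castLE (by omega) j) : ℕ), key j⟩, ?_, ?_, ?_⟩
  · rw [Fintype.bijective_iff_injective_and_card]
    refine ⟨?_, rfl⟩
    intro i j hij
    have hv := congrArg Fin.val hij
    simp only at hv
    have := hbij.injective (Fin.ext hv : π _ = π _)
    have := congrArg Fin.val this
    exact Fin.ext (by simpa using this)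
  · funext i
    apply Fin.ext
    by_cases hi : (i:ℕ) < n
    · rw [appendMax_val_lt _ hi]
      simp only
      congr 1 <;> exact Fin.ext rfl
    · rw [appendMax_val_last _ hi]
      have : i = Fin.last n := Fin.ext (by have := i.isLt; simp [Fin.last]; omega)
      rw [this, hlast]
      try rfl
  · intro i j
    rw [Fin.lt_def, Fin.lt_def]

lemma exists_restrict_first {n} {π : Fin (n+1) → Fin (n+1)} (hbij : Function.Bijective π)
    (hzero : π 0 = Fin.last n) :
    ∃ σ : Fin n → Fin n, Function.Bijective σ ∧ prependMax σ = π ∧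
      ∀ i j : Fin n, σ i < σ j ↔ π i.succ < π j.succ := by
  have key : ∀ j : Fin n, (π j.succ : ℕ) < n := by
    intro j
    have h1 : (j.succ : Fin (n+1)) ≠ 0 := Fin.succ_ne_zero j
    have h2 : π j.succ ≠ Fin.last n := fun h => h1 (hbij.injective (h.trans hzero.symm))
    have := (π j.succ).isLt
    have h3 : (π j.succ : ℕ) ≠ n := fun h => h2 (Fin.ext (by simp [Fin.last, h]))
    omega
  refine ⟨fun j => ⟨(π j.succ : ℕ), key j⟩, ?_, ?_, ?_⟩
  · rw [Fintype.bijective_iff_injective_and_card]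
    refine ⟨?_, rfl⟩
    intro i j hij
    have hv := congrArg Fin.val hij
    simp only at hv
    have := congrArg Fin.val (hbij.injective (Fin.ext hv : π _ = π _))
    simp only [Fin.val_succ] at this
    exact Fin.ext (by omega)
  · funext i
    apply Fin.ext
    by_cases hi : (i:ℕ) = 0
    · rw [prependMax_val_zero _ hi]
      have : i = 0 := Fin.ext hi
      rw [this, hzero]
      try rfl
    · rw [prependMax_val_pos _ hi (by have := i.isLt; omega)]
      simp only
      congr 2
      apply Fin.ext
      simp [Fin.val_succ]
      omega
  · intro i j
    rw [Fin.lt_def, Fin.lt_def]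

lemma head_gt_tail {m} {π : Fin (m+2) → Fin (m+2)} (hbij : Function.Bijective π)
    (hA : Avoids π ![1,3,2]) (hone : π 1 = Fin.last (m+1)) :
    ∀ j : Fin (m+2), 2 ≤ (j:ℕ) → π j < π 0 := by
  intro j hj
  have hjlt := j.isLt
  have hone' : (π 1 : ℕ) = m + 1 := by rw [hone]; simp [Fin.last]
  have hne0 : (π j : ℕ) ≠ (π 0 : ℕ) := fun h => by
    have h3 := congrArg Fin.val (hbij.injective (Fin.ext h))
    simp only [Fin.val_zero] at h3
    omega
  have hne1 : (π j : ℕ) ≠ (π 1 : ℕ) := fun h => by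
    have h3 := congrArg Fin.val (hbij.injective (Fin.ext h))
    simp only [Fin.val_one] at h3
    omega
  rw [Fin.lt_def]
  by_contra hlt
  push_neg at hlt
  have hjl := (π j).isLt
  refine hA ((c132 π).2 ⟨0, 1, j, by rw [Fin.lt_def]; simp,
    by rw [Fin.lt_def]; simp only [Fin.val_one]; omega,
    by rw [Fin.lt_def]; omega,
    by rw [Fin.lt_def, hone']; omega⟩)

lemma exists_restrict_two {m} {π : Fin (m+2) → Fin (m+2)} (hbij : Function.Bijective π)
    (hone : π 1 = Fin.last (m+1)) (hgt : ∀ j : Fin (m+2), 2 ≤ (j:ℕ) → π j < π 0) :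
    ∃ σ : Fin m → Fin m, Function.Bijective σ ∧ prepend2 σ = π ∧
      ∀ i j : Fin m, σ i < σ j ↔
        π ⟨(i:ℕ)+2, by omega⟩ < π ⟨(j:ℕ)+2, by omega⟩ := by
  have hzval : (π 0 : ℕ) = m := by
    have hne1 : π 0 ≠ π 1 := fun h => by
      have h2 := congrArg Fin.val (hbij.injective h)
      simp only [Fin.val_zero, Fin.val_one] at h2
      omega
    have hle : (π 0 : ℕ) ≤ m := by
      have h0 := (π 0).isLt
      have h1 : (π 1 : ℕ) = m + 1 := by rw [hone]; simp [Fin.last]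
      have h2 : (π 0:ℕ) ≠ (π 1:ℕ) := fun h => hne1 (Fin.ext h)
      omega
    have hge : m ≤ (π 0 : ℕ) := by
      have hinj : Function.Injective
          (fun j : Fin m => (⟨(π ⟨(j:ℕ)+2, by omega⟩ : ℕ),
            hgt ⟨(j:ℕ)+2, by omega⟩ (by simp)⟩ : Fin (π 0 : ℕ))) := by
        intro i j hij
        have hv := congrArg Fin.val hij
        simp only at hv
        have := congrArg Fin.val (hbij.injective (Fin.ext hv : π _ = π _))
        simp only at this
        exact Fin.ext (by omega)
      have := Fintype.card_le_of_injective _ hinj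
      simpa using this
    omega
  have key : ∀ j : Fin m, (π ⟨(j:ℕ)+2, by omega⟩ : ℕ) < m := by
    intro j
    have := hgt ⟨(j:ℕ)+2, by omega⟩ (by simp)
    rw [Fin.lt_def] at this
    omega
  refine ⟨fun j => ⟨(π ⟨(j:ℕ)+2, by omega⟩ : ℕ), key j⟩, ?_, ?_, ?_⟩
  · rw [Fintype.bijective_iff_injective_and_card]
    refine ⟨?_, rfl⟩
    intro i j hij
    have hv := congrArg Fin.val hij
    simp only at hv
    have := congrArg Fin.val (hbij.injective (Fin.ext hv : π _ = π _))
    simp only at this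
    exact Fin.ext (by omega)
  · funext i
    apply Fin.ext
    have hi2 := i.isLt
    rcases show (i:ℕ) = 0 ∨ (i:ℕ) = 1 ∨ 2 ≤ (i:ℕ) by omega with hi | hi | hi
    · rw [prepend2_val0 _ hi]
      have : i = 0 := Fin.ext hi
      rw [this, hzval]
    · rw [prepend2_val1 _ hi]
      have : i = 1 := Fin.ext (by simpa using hi)
      rw [this, hone]
      simp [Fin.last]
    · rw [prepend2_valtail _ hi (by omega)]
      simp only
      congr 2 <;> exact Fin.ext (by simp; omega)
  · intro i j
    rw [Fin.lt_def, Fin.lt_def]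

lemma prependMax_inj {n} : Function.Injective (@prependMax n) := by
  intro σ τ h
  funext j
  have hp : ((j.succ : Fin (n+1)) : ℕ) ≠ 0 := by simp [Fin.val_succ]
  have hp' : ((j.succ : Fin (n+1)) : ℕ) - 1 < n := by simp only [Fin.val_succ]; omega
  have h1 := prependMax_val_pos σ hp hp'
  have h2 := prependMax_val_pos τ hp hp'
  have h3 := congrFun h j.succ
  have hj : (⟨((j.succ : Fin (n+1)) : ℕ) - 1, hp'⟩ : Fin n) = j := Fin.ext (by simp [Fin.val_succ])
  apply Fin.ext
  rw [← hj, ← h1, ← h2, h3]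

set_option maxHeartbeats 1000000 in
lemma prepend2_inj {m} : Function.Injective (@prepend2 m) := by
  intro σ τ h
  funext j
  have hlt : ((j:ℕ)+2) < m + 2 := by omega
  have hp : 2 ≤ ((⟨(j:ℕ)+2, hlt⟩ : Fin (m+2)) : ℕ) := by show 2 ≤ (j:ℕ)+2; omega
  have hp' : ((⟨(j:ℕ)+2, hlt⟩ : Fin (m+2)) : ℕ) - 2 < m := by
    show (j:ℕ)+2-2 < m; omega
  have h1 := prepend2_valtail σ hp hp'
  have h2 := prepend2_valtail τ hp hp'
  have h3 := congrFun h ⟨(j:ℕ)+2, hlt⟩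
  have hj : (⟨((⟨(j:ℕ)+2, hlt⟩ : Fin (m+2)) : ℕ) - 2, hp'⟩ : Fin m) = j :=
    Fin.ext (by show (j:ℕ)+2-2 = (j:ℕ); omega)
  have hv := congrArg Fin.val h3
  rw [h1, h2, hj] at hv
  exact Fin.ext hv

lemma decMax_mem_T (m : ℕ) : decMax m ∈ Tset m := by
  refine ⟨decMax_bij m, ?_, ?_, ?_⟩
  · rw [Avoids, c123]
    rintro ⟨a, b, c, hab, hbc, h1, h2⟩
    rw [Fin.lt_def] at hab hbc h1 h2
    have hc := c.isLt
    have hbne : (b:ℕ) ≠ m - 1 := by omega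
    have hane : (a:ℕ) ≠ m - 1 := by omega
    rw [decMax_val hane, decMax_val hbne] at h1
    omega
  · rw [Avoids, c132]
    rintro ⟨a, b, c, hab, hbc, h1, h2⟩
    rw [Fin.lt_def] at hab hbc h1 h2
    have hc := c.isLt
    have hbne : (b:ℕ) ≠ m - 1 := by omega
    have hane : (a:ℕ) ≠ m - 1 := by omega
    by_cases hcne : (c:ℕ) = m - 1
    · rw [decMax_val_last hcne, decMax_val hbne] at h2
      omega
    · rw [decMax_val hane, decMax_val hcne] at h1
      omega
  · rw [Avoids, c3241]
    rintro ⟨a, b, c, d, hab, hbc, hcd, h1, h2, h3⟩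
    rw [Fin.lt_def] at hab hbc hcd h1 h2 h3
    have hd := d.isLt
    have hane : (a:ℕ) ≠ m - 1 := by omega
    have hcne : (c:ℕ) ≠ m - 1 := by omega
    rw [decMax_val hane, decMax_val hcne] at h3
    omega

lemma decMax_last (m : ℕ) : decMax (m+1) (Fin.last m) = Fin.last m := by
  apply Fin.ext
  rw [decMax_val_last (by simp [Fin.last])]
  simp [Fin.last]

lemma unique_dec {m : ℕ} {τ : Fin (m+1) → Fin (m+1)} (hτ : τ ∈ Tset (m+1))
    (hlast : τ (Fin.last m) = Fin.last m) : τ = decMax (m+1) := by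
  obtain ⟨hbij, h123, h132, h3241⟩ := hτ
  have hlv : (τ (Fin.last m) : ℕ) = m := by rw [hlast]; simp [Fin.last]
  have hnel : ∀ x : Fin (m+1), (x:ℕ) < m → (τ x : ℕ) ≠ m := by
    intro x hx h
    have : τ x = τ (Fin.last m) := Fin.ext (by rw [hlv]; exact h)
    have := congrArg Fin.val (hbij.injective this)
    simp [Fin.last] at this
    omega
  have key : ∀ i j : Fin (m+1), (i:ℕ) < (j:ℕ) → (j:ℕ) < m → (τ j : ℕ) < (τ i : ℕ) := by
    intro i j hij hjm
    have hne : (τ i : ℕ) ≠ (τ j : ℕ) := fun h => by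
      have := congrArg Fin.val (hbij.injective (Fin.ext h))
      omega
    by_contra hle
    push_neg at hle
    refine h123 ((c123 τ).2 ⟨i, j, Fin.last m, Fin.lt_def.2 hij,
      Fin.lt_def.2 (by simp [Fin.last]; omega), Fin.lt_def.2 (by omega), Fin.lt_def.2 ?_⟩)
    rw [hlv]
    have := (τ j).isLt
    have := hnel j hjm
    omega
  have up : ∀ k, ∀ hk : k < m, (τ ⟨k, by omega⟩ : ℕ) ≤ m - 1 - k := by
    intro k
    induction k with
    | zero =>
      intro hk
      have := (τ ⟨0, by omega⟩).isLt
      have := hnel ⟨0, by omega⟩ (by simpa using hk)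
      omega
    | succ k ih =>
      intro hk
      have h1 := ih (by omega)
      have h2 := key ⟨k, by omega⟩ ⟨k+1, by omega⟩ (by simp) (by simpa using hk)
      omega
  have low : ∀ d k, ∀ hk : k < m, m - 1 - k = d → d ≤ (τ ⟨k, by omega⟩ : ℕ) := by
    intro d
    induction d with
    | zero => intro k _ _; omega
    | succ d ih =>
      intro k hk hd
      have hk1 : k + 1 < m := by omega
      have h1 := ih (k+1) hk1 (by omega)
      have h2 := key ⟨k, by omega⟩ ⟨k+1, by omega⟩ (by simp) (by simpa using hk1)
      omega
  funext i
  apply Fin.ext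
  have hi := i.isLt
  by_cases him : (i:ℕ) = m
  · have : i = Fin.last m := Fin.ext (by simpa [Fin.last] using him)
    rw [this, hlast, decMax_last]
  · have hklt : (i:ℕ) < m := by omega
    have h1 := up (i:ℕ) hklt
    have h2 := low (m - 1 - (i:ℕ)) (i:ℕ) hklt rfl
    have hmk : (⟨(i:ℕ), by omega⟩ : Fin (m+1)) = i := Fin.ext rfl
    rw [hmk] at h1 h2
    rw [decMax_val (by simp; omega)]
    simp
    omega

lemma cover_S {n : ℕ} {π : Fin (n+3) → Fin (n+3)} (hπ : π ∈ Sset (n+3)) :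
    π 0 = Fin.last (n+2) ∨ π 1 = Fin.last (n+2) ∨ π (Fin.last (n+2)) = Fin.last (n+2) := by
  obtain ⟨hbij, h132, h2341, h3241, h45⟩ := hπ
  obtain ⟨i, hi⟩ := hbij.surjective (Fin.last (n+2))
  have hiv := i.isLt
  have hival : (π i : ℕ) = n + 2 := by rw [hi]; simp [Fin.last]
  rcases show (i:ℕ) = 0 ∨ (i:ℕ) = 1 ∨ (i:ℕ) = n+2 ∨ (2 ≤ (i:ℕ) ∧ (i:ℕ) < n+2) by omega
    with h | h | h | ⟨h2, hlt⟩
  · exact Or.inl (by rw [← hi]; congr 1; exact Fin.ext (by simp [h]))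
  · exact Or.inr (Or.inl (by rw [← hi]; congr 1; exact Fin.ext (by simp [h])))
  · refine Or.inr (Or.inr ?_)
    have hieq : i = Fin.last (n+2) := Fin.ext (by simp [Fin.last, h])
    exact hieq ▸ hi
  · exfalso
    have hne : ∀ x : Fin (n+3), (x:ℕ) ≠ (i:ℕ) → (π x : ℕ) ≠ n + 2 := by
      intro x hx h
      have : π x = π i := Fin.ext (by omega)
      have := congrArg Fin.val (hbij.injective this)
      omega
    have hL : ((Fin.last (n+2) : Fin (n+3)) : ℕ) = n + 2 := by simp [Fin.last]
    have hu := hne 0 (by simp; omega)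
    have hv := hne 1 (by simp [Fin.val_one]; omega)
    have hw := hne (Fin.last (n+2)) (by rw [hL]; omega)
    have hul := (π 0).isLt
    have hvl := (π 1).isLt
    have hwl := (π (Fin.last (n+2))).isLt
    have huv : (π 0 : ℕ) ≠ (π 1 : ℕ) := fun h => by
      have := congrArg Fin.val (hbij.injective (Fin.ext h))
      simp [Fin.val_zero, Fin.val_one] at this
    have hwu : (π (Fin.last (n+2)) : ℕ) ≠ (π 0 : ℕ) := fun h => by
      have := congrArg Fin.val (hbij.injective (Fin.ext h))
      simp [Fin.last] at this <;> omega
    have hwv : (π (Fin.last (n+2)) : ℕ) ≠ (π 1 : ℕ) := fun h => by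
      have := congrArg Fin.val (hbij.injective (Fin.ext h))
      simp [Fin.last, Fin.val_one] at this <;> omega
    by_cases huw : (π 0 : ℕ) < (π (Fin.last (n+2)) : ℕ)
    · exact h132 ((c132 π).2 ⟨0, i, Fin.last (n+2), Fin.lt_def.2 (by simp only [Fin.val_zero, Fin.coe_ofNat_eq_mod, Nat.zero_mod]; omega),
        Fin.lt_def.2 (by rw [hL]; omega), Fin.lt_def.2 huw,
        Fin.lt_def.2 (by rw [hival]; omega)⟩)
    by_cases hvw : (π 1 : ℕ) < (π (Fin.last (n+2)) : ℕ)
    · exact h132 ((c132 π).2 ⟨1, i, Fin.last (n+2), Fin.lt_def.2 (by simp [Fin.val_one]; omega),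
        Fin.lt_def.2 (by rw [hL]; omega), Fin.lt_def.2 hvw,
        Fin.lt_def.2 (by rw [hival]; omega)⟩)
    push_neg at huw hvw
    by_cases huv' : (π 0 : ℕ) < (π 1 : ℕ)
    · exact h2341 ((c2341 π).2 ⟨0, 1, i, Fin.last (n+2),
        Fin.lt_def.2 (by simp [Fin.val_zero, Fin.val_one]),
        Fin.lt_def.2 (by simp [Fin.val_one]; omega), Fin.lt_def.2 (by rw [hL]; omega),
        Fin.lt_def.2 (by omega), Fin.lt_def.2 huv', Fin.lt_def.2 (by rw [hival]; omega)⟩)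
    · exact h3241 ((c3241 π).2 ⟨0, 1, i, Fin.last (n+2),
        Fin.lt_def.2 (by simp [Fin.val_zero, Fin.val_one]),
        Fin.lt_def.2 (by simp [Fin.val_one]; omega), Fin.lt_def.2 (by rw [hL]; omega),
        Fin.lt_def.2 (by omega), Fin.lt_def.2 (by omega), Fin.lt_def.2 (by rw [hival]; omega)⟩)

lemma cover_T {m : ℕ} {τ : Fin (m+3) → Fin (m+3)} (hτ : τ ∈ Tset (m+3)) :
    τ 0 = Fin.last (m+2) ∨ τ 1 = Fin.last (m+2) ∨ τ (Fin.last (m+2)) = Fin.last (m+2) := by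
  obtain ⟨hbij, h123, h132, h3241⟩ := hτ
  obtain ⟨i, hi⟩ := hbij.surjective (Fin.last (m+2))
  have hiv := i.isLt
  have hival : (τ i : ℕ) = m + 2 := by rw [hi]; simp [Fin.last]
  rcases show (i:ℕ) = 0 ∨ (i:ℕ) = 1 ∨ (i:ℕ) = m+2 ∨ (2 ≤ (i:ℕ) ∧ (i:ℕ) < m+2) by omega
    with h | h | h | ⟨h2, hlt⟩
  · exact Or.inl (by rw [← hi]; congr 1; exact Fin.ext (by simp [h]))
  · exact Or.inr (Or.inl (by rw [← hi]; congr 1; exact Fin.ext (by simp [h])))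
  · refine Or.inr (Or.inr ?_)
    have hieq : i = Fin.last (m+2) := Fin.ext (by simp [Fin.last, h])
    exact hieq ▸ hi
  · exfalso
    have hne : ∀ x : Fin (m+3), (x:ℕ) ≠ (i:ℕ) → (τ x : ℕ) ≠ m + 2 := by
      intro x hx h
      have : τ x = τ i := Fin.ext (by omega)
      have := congrArg Fin.val (hbij.injective this)
      omega
    have hL : ((Fin.last (m+2) : Fin (m+3)) : ℕ) = m + 2 := by simp [Fin.last]
    have hu := hne 0 (by simp; omega)
    have hv := hne 1 (by simp [Fin.val_one]; omega)
    have hw := hne (Fin.last (m+2)) (by rw [hL]; omega)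
    have hul := (τ 0).isLt
    have hvl := (τ 1).isLt
    have hwl := (τ (Fin.last (m+2))).isLt
    have huv : (τ 0 : ℕ) ≠ (τ 1 : ℕ) := fun h => by
      have := congrArg Fin.val (hbij.injective (Fin.ext h))
      simp [Fin.val_zero, Fin.val_one] at this
    have hwv : (τ (Fin.last (m+2)) : ℕ) ≠ (τ 1 : ℕ) := fun h => by
      have := congrArg Fin.val (hbij.injective (Fin.ext h))
      simp [Fin.last, Fin.val_one] at this <;> omega
    by_cases huv' : (τ 0 : ℕ) < (τ 1 : ℕ)
    · exact h123 ((c123 τ).2 ⟨0, 1, i, Fin.lt_def.2 (by simp [Fin.val_zero, Fin.val_one]),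
        Fin.lt_def.2 (by simp [Fin.val_one]; omega), Fin.lt_def.2 huv',
        Fin.lt_def.2 (by rw [hival]; omega)⟩)
    by_cases hvw : (τ 1 : ℕ) < (τ (Fin.last (m+2)) : ℕ)
    · exact h132 ((c132 τ).2 ⟨1, i, Fin.last (m+2), Fin.lt_def.2 (by simp [Fin.val_one]; omega),
        Fin.lt_def.2 (by rw [hL]; omega), Fin.lt_def.2 hvw,
        Fin.lt_def.2 (by rw [hival]; omega)⟩)
    · push_neg at huv' hvw
      exact h3241 ((c3241 τ).2 ⟨0, 1, i, Fin.last (m+2),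
        Fin.lt_def.2 (by simp [Fin.val_zero, Fin.val_one]),
        Fin.lt_def.2 (by simp [Fin.val_one]; omega), Fin.lt_def.2 (by rw [hL]; omega),
        Fin.lt_def.2 (by omega), Fin.lt_def.2 (by omega), Fin.lt_def.2 (by rw [hival]; omega)⟩)

lemma avoids_restrict {m n k : ℕ} {σ : Fin m → Fin m} {π : Fin n → Fin n} (e : Fin m → Fin n)
    (he : StrictMono e) (hord : ∀ i j, σ i < σ j ↔ π (e i) < π (e j)) (p : Fin k → ℕ)
    (h : Avoids π p) : Avoids σ p := fun hc => h (contains_of_embed e he hord p hc)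

lemma appendMax_mem_S {n} {σ : Fin n → Fin n} (h : σ ∈ Sset n) : appendMax σ ∈ Sset (n+1) :=
  ⟨appendMax_bij h.1, aM_132 h.2.1, aM_2341 h.2.2.1, aM_3241 h.2.2.2.1, aM_45123 h.2.2.2.2⟩

lemma prependMax_mem_S {n} {σ : Fin n → Fin n} (h : σ ∈ Sset n) : prependMax σ ∈ Sset (n+1) :=
  ⟨prependMax_bij h.1, pM_132 h.2.1, pM_2341 h.2.2.1, pM_3241 h.2.2.2.1, pM_45123 h.2.2.2.2⟩

lemma prependMax_mem_T {m} {σ : Fin m → Fin m} (h : σ ∈ Tset m) : prependMax σ ∈ Tset (m+1) :=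
  ⟨prependMax_bij h.1, pM_123 h.2.1, pM_132 h.2.2.1, pM_3241 h.2.2.2⟩

lemma prepend2_mem_S {m} {σ : Fin m → Fin m} (h : σ ∈ Tset m) : prepend2 σ ∈ Sset (m+2) :=
  ⟨prepend2_bij h.1, p2_132 h.2.2.1, p2_2341 h.2.1, p2_3241 h.2.2.2, p2_45123 h.2.1⟩

lemma prepend2_mem_T {m} {σ : Fin m → Fin m} (h : σ ∈ Tset m) : prepend2 σ ∈ Tset (m+2) :=
  ⟨prepend2_bij h.1, p2_123 h.2.1, p2_132 h.2.2.1, p2_3241 h.2.2.2⟩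

lemma castLE_sm {n k : ℕ} (h : n ≤ k) : StrictMono (Fin.castLE h) := by
  intro a b hab
  rw [Fin.lt_def] at hab ⊢
  simpa using hab

lemma succ_sm {n : ℕ} : StrictMono (Fin.succ : Fin n → Fin (n+1)) := by
  intro a b hab
  rw [Fin.lt_def] at hab ⊢
  simpa [Fin.val_succ] using hab

lemma shift2_sm {m : ℕ} : StrictMono (fun j : Fin m => (⟨(j:ℕ)+2, by omega⟩ : Fin (m+2))) := by
  intro a b hab
  rw [Fin.lt_def] at hab
  show ((⟨(a:ℕ)+2, by omega⟩ : Fin (m+2)) : ℕ) < ((⟨(b:ℕ)+2, by omega⟩ : Fin (m+2)) : ℕ)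
  show (a:ℕ)+2 < (b:ℕ)+2
  omega

lemma restrict_two_123 {m} {π : Fin (m+2) → Fin (m+2)} {σ : Fin m → Fin m}
    (hbij : Function.Bijective π)
    (h45 : Avoids π ![4,5,1,2,3]) (hone : π 1 = Fin.last (m+1))
    (hgt : ∀ j : Fin (m+2), 2 ≤ (j:ℕ) → π j < π 0)
    (hord : ∀ i j : Fin m, σ i < σ j ↔ π ⟨(i:ℕ)+2, by omega⟩ < π ⟨(j:ℕ)+2, by omega⟩) :
    Avoids σ ![1,2,3] := by
  rw [Avoids, c123]
  rintro ⟨a, b, c, hab, hbc, h1, h2⟩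
  rw [Fin.lt_def] at hab hbc
  have honev : (π 1 : ℕ) = m + 1 := by rw [hone]; simp [Fin.last]
  have hz1 : (π 0 : ℕ) ≠ (π 1 : ℕ) := fun h => by
    have := congrArg Fin.val (hbij.injective (Fin.ext h))
    simp [Fin.val_zero, Fin.val_one] at this
  have h0l := (π 0).isLt
  refine h45 ((c45123 π).2 ⟨0, 1, ⟨(a:ℕ)+2, by omega⟩, ⟨(b:ℕ)+2, by omega⟩, ⟨(c:ℕ)+2, by omega⟩,
    Fin.lt_def.2 (by simp [Fin.val_zero, Fin.val_one]),
    Fin.lt_def.2 (by simp only [Fin.val_one]; show 1 < (a:ℕ)+2; omega),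
    Fin.lt_def.2 (by show (a:ℕ)+2 < (b:ℕ)+2; omega),
    Fin.lt_def.2 (by show (b:ℕ)+2 < (c:ℕ)+2; omega),
    (hord a b).1 h1, (hord b c).1 h2,
    hgt _ (by show 2 ≤ (c:ℕ)+2; omega),
    Fin.lt_def.2 (by rw [honev]; omega)⟩)

lemma S_decomp (n : ℕ) :
    (Sset (n+3)).ncard = 2 * (Sset (n+2)).ncard + (Tset (n+1)).ncard := by
  classical
  have hlastval : ((Fin.last (n+2) : Fin (n+3)) : ℕ) = n + 2 := by simp [Fin.last]
  set A := {π ∈ Sset (n+3) | π (Fin.last (n+2)) = Fin.last (n+2)} with hAdef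
  set B := {π ∈ Sset (n+3) | π 0 = Fin.last (n+2)} with hBdef
  set C := {π ∈ Sset (n+3) | π 1 = Fin.last (n+2)} with hCdef
  have hA : A = appendMax '' (Sset (n+2)) := by
    apply Set.eq_of_subset_of_subset
    · rintro π ⟨hS, hlast⟩
      obtain ⟨σ, hbij, heq, hord⟩ := exists_restrict_last hS.1 hlast
      refine ⟨σ, ⟨hbij, ?_, ?_, ?_, ?_⟩, heq⟩ <;>
        exact avoids_restrict _ (castLE_sm (by omega)) hord _ (by
          first
            | exact hS.2.1 | exact hS.2.2.1 | exact hS.2.2.2.1 | exact hS.2.2.2.2)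
    · rintro π ⟨σ, hσ, rfl⟩
      refine ⟨appendMax_mem_S hσ, ?_⟩
      apply Fin.ext
      rw [appendMax_val_last σ (by rw [hlastval]; omega), hlastval]
  have hB : B = prependMax '' (Sset (n+2)) := by
    apply Set.eq_of_subset_of_subset
    · rintro π ⟨hS, hzero⟩
      obtain ⟨σ, hbij, heq, hord⟩ := exists_restrict_first hS.1 hzero
      refine ⟨σ, ⟨hbij, ?_, ?_, ?_, ?_⟩, heq⟩ <;>
        exact avoids_restrict _ succ_sm hord _ (by
          first
            | exact hS.2.1 | exact hS.2.2.1 | exact hS.2.2.2.1 | exact hS.2.2.2.2)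
    · rintro π ⟨σ, hσ, rfl⟩
      refine ⟨prependMax_mem_S hσ, ?_⟩
      apply Fin.ext
      rw [prependMax_val_zero σ (by simp), hlastval]
  have hC : C = prepend2 '' (Tset (n+1)) := by
    apply Set.eq_of_subset_of_subset
    · rintro π ⟨hS, hone⟩
      have hgt := head_gt_tail hS.1 hS.2.1 hone
      obtain ⟨σ, hbij, heq, hord⟩ := exists_restrict_two hS.1 hone hgt
      refine ⟨σ, ⟨hbij, restrict_two_123 hS.1 hS.2.2.2.2 hone hgt hord,
        avoids_restrict _ shift2_sm hord _ hS.2.1,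
        avoids_restrict _ shift2_sm hord _ hS.2.2.2.1⟩, heq⟩
    · rintro π ⟨σ, hσ, rfl⟩
      refine ⟨prepend2_mem_S hσ, ?_⟩
      apply Fin.ext
      rw [prepend2_val1 σ (by simp [Fin.val_one]), hlastval]
  have hcover : Sset (n+3) = A ∪ B ∪ C := by
    apply Set.eq_of_subset_of_subset
    · intro π hπ
      rcases cover_S hπ with h | h | h
      · exact Or.inl (Or.inr ⟨hπ, h⟩)
      · exact Or.inr ⟨hπ, h⟩
      · exact Or.inl (Or.inl ⟨hπ, h⟩)
    · rintro π ((⟨h, -⟩ | ⟨h, -⟩) | ⟨h, -⟩) <;> exact h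
  have hABd : Disjoint A B := by
    rw [Set.disjoint_left]
    rintro π ⟨hS, h1⟩ ⟨-, h2⟩
    have := congrArg Fin.val (hS.1.injective (h1.trans h2.symm))
    rw [hlastval] at this
    simp at this
  have hABCd : Disjoint (A ∪ B) C := by
    rw [Set.disjoint_left]
    rintro π (⟨hS, h1⟩ | ⟨hS, h1⟩) ⟨-, h2⟩ <;>
    · have := congrArg Fin.val (hS.1.injective (h1.trans h2.symm))
      first
        | (rw [hlastval] at this; simp [Fin.val_one] at this; omega)
        | (simp [Fin.val_zero, Fin.val_one] at this)
  rw [hcover, Set.ncard_union_eq hABCd (Set.toFinite _) (Set.toFinite _),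
    Set.ncard_union_eq hABd (Set.toFinite _) (Set.toFinite _), hA, hB, hC,
    Set.ncard_image_of_injective _ appendMax_inj,
    Set.ncard_image_of_injective _ prependMax_inj,
    Set.ncard_image_of_injective _ prepend2_inj]
  ring

lemma T_decomp (m : ℕ) :
    (Tset (m+3)).ncard = (Tset (m+2)).ncard + (Tset (m+1)).ncard + 1 := by
  classical
  have hlastval : ((Fin.last (m+2) : Fin (m+3)) : ℕ) = m + 2 := by simp [Fin.last]
  set A := {τ ∈ Tset (m+3) | τ 0 = Fin.last (m+2)} with hAdef
  set C := {τ ∈ Tset (m+3) | τ 1 = Fin.last (m+2)} with hCdef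
  set D := {τ ∈ Tset (m+3) | τ (Fin.last (m+2)) = Fin.last (m+2)} with hDdef
  have hA : A = prependMax '' (Tset (m+2)) := by
    apply Set.eq_of_subset_of_subset
    · rintro τ ⟨hT, hzero⟩
      obtain ⟨σ, hbij, heq, hord⟩ := exists_restrict_first hT.1 hzero
      refine ⟨σ, ⟨hbij, ?_, ?_, ?_⟩, heq⟩ <;>
        exact avoids_restrict _ succ_sm hord _ (by
          first | exact hT.2.1 | exact hT.2.2.1 | exact hT.2.2.2)
    · rintro τ ⟨σ, hσ, rfl⟩
      refine ⟨prependMax_mem_T hσ, ?_⟩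
      apply Fin.ext
      rw [prependMax_val_zero σ (by simp), hlastval]
  have hC : C = prepend2 '' (Tset (m+1)) := by
    apply Set.eq_of_subset_of_subset
    · rintro τ ⟨hT, hone⟩
      have hgt := head_gt_tail hT.1 hT.2.2.1 hone
      obtain ⟨σ, hbij, heq, hord⟩ := exists_restrict_two hT.1 hone hgt
      refine ⟨σ, ⟨hbij, ?_, ?_, ?_⟩, heq⟩ <;>
        exact avoids_restrict _ shift2_sm hord _ (by
          first | exact hT.2.1 | exact hT.2.2.1 | exact hT.2.2.2)
    · rintro τ ⟨σ, hσ, rfl⟩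
      refine ⟨prepend2_mem_T hσ, ?_⟩
      apply Fin.ext
      rw [prepend2_val1 σ (by simp [Fin.val_one]), hlastval]
  have hD : D = {decMax (m+3)} := by
    apply Set.eq_of_subset_of_subset
    · rintro τ ⟨hT, hlast⟩
      exact unique_dec hT hlast
    · rintro τ rfl
      exact ⟨decMax_mem_T (m+3), decMax_last (m+2)⟩
  have hcover : Tset (m+3) = A ∪ C ∪ D := by
    apply Set.eq_of_subset_of_subset
    · intro τ hτ
      rcases cover_T hτ with h | h | h
      · exact Or.inl (Or.inl ⟨hτ, h⟩)
      · exact Or.inl (Or.inr ⟨hτ, h⟩)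
      · exact Or.inr ⟨hτ, h⟩
    · rintro τ ((⟨h, -⟩ | ⟨h, -⟩) | ⟨h, -⟩) <;> exact h
  have hACd : Disjoint A C := by
    rw [Set.disjoint_left]
    rintro τ ⟨hT, h1⟩ ⟨-, h2⟩
    have := congrArg Fin.val (hT.1.injective (h1.trans h2.symm))
    simp [Fin.val_zero, Fin.val_one] at this
  have hACDd : Disjoint (A ∪ C) D := by
    rw [Set.disjoint_left]
    rintro τ (⟨hT, h1⟩ | ⟨hT, h1⟩) ⟨-, h2⟩ <;>
    · have := congrArg Fin.val (hT.1.injective (h1.trans h2.symm))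
      rw [hlastval] at this
      simp only [Fin.val_zero, Fin.val_one] at this
      omega
  rw [hcover, Set.ncard_union_eq hACDd (Set.toFinite _) (Set.toFinite _),
    Set.ncard_union_eq hACd (Set.toFinite _) (Set.toFinite _), hA, hC, hD,
    Set.ncard_image_of_injective _ prependMax_inj,
    Set.ncard_image_of_injective _ prepend2_inj, Set.ncard_singleton]

lemma bij_one {π : Fin 1 → Fin 1} : Function.Bijective π :=
  ⟨fun a b _ => Subsingleton.elim a b, fun b => ⟨b, Subsingleton.elim _ _⟩⟩

lemma Sset_one : (Sset 1).ncard = 1 := by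
  have : Sset 1 = Set.univ := Set.eq_univ_of_forall (fun π =>
    ⟨bij_one, avoids_small _ _ (by omega), avoids_small _ _ (by omega),
     avoids_small _ _ (by omega), avoids_small _ _ (by omega)⟩)
  rw [this, Set.ncard_univ]
  simp [Nat.card_eq_fintype_card]

lemma Tset_one : (Tset 1).ncard = 1 := by
  have : Tset 1 = Set.univ := Set.eq_univ_of_forall (fun π =>
    ⟨bij_one, avoids_small _ _ (by omega), avoids_small _ _ (by omega),
     avoids_small _ _ (by omega)⟩)
  rw [this, Set.ncard_univ]
  simp [Nat.card_eq_fintype_card]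

def swf : Fin 2 → Fin 2 := fun i => ⟨1 - (i:ℕ), by omega⟩

lemma swf_bij : Function.Bijective swf := by
  rw [Fintype.bijective_iff_injective_and_card]
  refine ⟨?_, rfl⟩
  intro a b h
  have hv := congrArg Fin.val h
  have := a.isLt
  have := b.isLt
  simp only [swf] at hv
  exact Fin.ext (by omega)

lemma bij_two {π : Fin 2 → Fin 2} (h : Function.Bijective π) : π = (fun i => i) ∨ π = swf := by
  have h01 : (π 0 : ℕ) ≠ (π 1 : ℕ) := fun e => by
    have := congrArg Fin.val (h.injective (Fin.ext e))
    simp [Fin.val_zero, Fin.val_one] at this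
  have l0 := (π 0).isLt
  have l1 := (π 1).isLt
  rcases show ((π 0:ℕ) = 0 ∧ (π 1:ℕ) = 1) ∨ ((π 0:ℕ) = 1 ∧ (π 1:ℕ) = 0) by omega
    with ⟨e0, e1⟩ | ⟨e0, e1⟩
  · left
    funext i
    have hi := i.isLt
    rcases show (i:ℕ)=0 ∨ (i:ℕ)=1 by omega with hh | hh
    · have hi0 : i = 0 := Fin.ext (by simp [hh])
      rw [hi0]
      exact Fin.ext (by simp [e0])
    · have hi1 : i = 1 := Fin.ext (by simp [Fin.val_one, hh])
      rw [hi1]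
      exact Fin.ext (by simp [Fin.val_one, e1])
  · right
    funext i
    have hi := i.isLt
    rcases show (i:ℕ)=0 ∨ (i:ℕ)=1 by omega with hh | hh
    · have hi0 : i = 0 := Fin.ext (by simp [hh])
      rw [hi0]
      exact Fin.ext (by simp [swf, e0])
    · have hi1 : i = 1 := Fin.ext (by simp [Fin.val_one, hh])
      rw [hi1]
      exact Fin.ext (by simp [swf, Fin.val_one, e1])

lemma pair_two : ({(fun i => i), swf} : Set (Fin 2 → Fin 2)).ncard = 2 := by
  apply Set.ncard_pair
  intro h
  have := congrArg Fin.val (congrFun h 0)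
  simp [swf] at this

lemma Sset_two : (Sset 2).ncard = 2 := by
  have hset : Sset 2 = {(fun i => i), swf} := by
    apply Set.eq_of_subset_of_subset
    · rintro π ⟨hb, -⟩
      rcases bij_two hb with h | h <;> simp [h]
    · rintro π (rfl | rfl)
      · exact ⟨Function.bijective_id, avoids_small _ _ (by omega), avoids_small _ _ (by omega),
          avoids_small _ _ (by omega), avoids_small _ _ (by omega)⟩
      · exact ⟨swf_bij, avoids_small _ _ (by omega), avoids_small _ _ (by omega),
          avoids_small _ _ (by omega), avoids_small _ _ (by omega)⟩
  rw [hset, pair_two]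

lemma Tset_two : (Tset 2).ncard = 2 := by
  have hset : Tset 2 = {(fun i => i), swf} := by
    apply Set.eq_of_subset_of_subset
    · rintro π ⟨hb, -⟩
      rcases bij_two hb with h | h <;> simp [h]
    · rintro π (rfl | rfl)
      · exact ⟨Function.bijective_id, avoids_small _ _ (by omega), avoids_small _ _ (by omega),
          avoids_small _ _ (by omega)⟩
      · exact ⟨swf_bij, avoids_small _ _ (by omega), avoids_small _ _ (by omega),
          avoids_small _ _ (by omega)⟩
  rw [hset, pair_two]

lemma T_val : ∀ m, (Tset (m+1)).ncard = Nat.fib (m+3) - 1 := by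
  intro m
  induction m using Nat.twoStepInduction with
  | zero => rw [Tset_one]; decide
  | one => rw [Tset_two]; decide
  | more m ih1 ih2 =>
    rw [T_decomp m, ih1, ih2]
    rw [show Nat.fib (m+1+3) = Nat.fib (m+4) from rfl,
      show Nat.fib (m+2+3) = Nat.fib (m+5) from rfl]
    have h1 := Nat.fib_pos.2 (show 0 < m + 3 by omega)
    have h2 := Nat.fib_pos.2 (show 0 < m + 4 by omega)
    have h3 : Nat.fib (m+5) = Nat.fib (m+3) + Nat.fib (m+4) := Nat.fib_add_two
    omega

lemma S_val : ∀ n, ((Sset (n+1)).ncard : ℤ) = 3 * 2^n - Nat.fib (n+4) + 1 := by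
  intro n
  induction n using Nat.twoStepInduction with
  | zero => rw [Sset_one]; norm_num [show Nat.fib 4 = 3 from by decide]
  | one => rw [Sset_two]; norm_num [show Nat.fib 5 = 5 from by decide]
  | more n ih1 ih2 =>
    rw [S_decomp n]
    push_cast
    rw [T_val n]
    have h1 := Nat.fib_pos.2 (show 0 < n + 3 by omega)
    have hc : ((Nat.fib (n+3) - 1 : ℕ) : ℤ) = (Nat.fib (n+3) : ℤ) - 1 := by
      omega
    rw [hc, ih2]
    rw [show Nat.fib (n+1+4) = Nat.fib (n+5) from rfl,
      show Nat.fib (n+2+4) = Nat.fib (n+6) from rfl]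
    have h3 : (Nat.fib (n+6) : ℤ) = Nat.fib (n+4) + Nat.fib (n+5) := by
      exact_mod_cast (Nat.fib_add_two : Nat.fib (n+6) = _)
    have h4 : (Nat.fib (n+5) : ℤ) = Nat.fib (n+3) + Nat.fib (n+4) := by
      exact_mod_cast (Nat.fib_add_two : Nat.fib (n+5) = _)
    rw [h3, h4]
    ring

/-- The Pell numbers. -/
def pell : ℕ → ℕ
  | 0 => 0
  | 1 => 1
  | n+2 => 2 * pell (n+1) + pell n

theorem stmt_11 (n : ℕ) (hn : 1 ≤ n) :
    (Nat.card ↥{π ∈ TSS132 n | Avoids π ![4,5,1,2,3]} : ℤ) =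
      3 * 2^(n-1) - Nat.fib (n+3) + 1 := by
  obtain ⟨k, rfl⟩ : ∃ k, n = k + 1 := ⟨n-1, by omega⟩
  have hset : {π ∈ TSS132 (k+1) | Avoids π ![4,5,1,2,3]} = Sset (k+1) := by
    ext π
    constructor
    · rintro ⟨⟨hb, h1, h2, h3⟩, h4⟩
      exact ⟨hb, h1, h2, h3, h4⟩
    · rintro ⟨hb, h1, h2, h3, h4⟩
      exact ⟨⟨hb, h1, h2, h3⟩, h4⟩
  rw [Nat.card_coe_set_eq, hset]
  rw [show k+1-1 = k from rfl, show k+1+3 = k+4 from rfl]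
  exact S_val k
end

section
/- For all n ≥ 2, the number of permutations of {1,...,n} avoiding the patterns 132, 2341, 3241, and 321 equals 2n - 2. -/
lemma le_apply_aux {n k : ℕ} {f : Fin k → Fin n} (hf : StrictMono f) :
    ∀ m (h : m < k), m ≤ (f ⟨m, h⟩ : ℕ) := by
  intro m
  induction m with
  | zero => intro h; omega
  | succ t ih =>
    intro h
    have h2 := hf (show (⟨t, by omega⟩ : Fin k) < ⟨t+1, h⟩ by simp [Fin.mk_lt_mk])
    have h3 := ih (by omega)
    rw [Fin.lt_def] at h2
    omega

lemma le_apply' {n k : ℕ} {f : Fin k → Fin n} (hf : StrictMono f) (i : Fin k) :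
    (i : ℕ) ≤ (f i : ℕ) := by
  simpa using le_apply_aux hf i.val i.isLt

lemma avoids_of_monoOn {n K : ℕ} {π : Fin n → Fin n}
    (h : ∀ a b : Fin n, K ≤ (a:ℕ) → a < b → π a < π b)
    {k : ℕ} {p : Fin k → ℕ} (i j : Fin k) (hij : i < j) (hi : K ≤ (i:ℕ))
    (hp : p j < p i) : Avoids π p := by
  rintro ⟨f, hf, hrel⟩
  have h1 : π (f j) < π (f i) := (hrel j i).mp hp
  have h2 : π (f i) < π (f j) := h _ _ (le_trans hi (le_apply' hf i)) (hf hij)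
  exact absurd h1 (lt_asymm h2)

def apfun (a i : ℕ) : ℕ := if i = 0 then a else if i ≤ a then i - 1 else i

def Aperm (n a : ℕ) (ha : a < n) : Fin n → Fin n :=
  fun i => ⟨apfun a i.val, by have := i.2; unfold apfun; split_ifs <;> omega⟩

def bpfun (m i : ℕ) : ℕ :=
  if i = 0 then m else if i = 1 then m+1 else if i ≤ m+1 then i - 2 else i

def Bperm (n m : ℕ) (hm : m+1 < n) : Fin n → Fin n :=
  fun i => ⟨bpfun m i.val, by have := i.2; unfold bpfun; split_ifs <;> omega⟩

lemma Aperm_bij {n a : ℕ} (ha : a < n) : Function.Bijective (Aperm n a ha) := by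
  rw [← Finite.injective_iff_bijective]
  intro i j hij
  have h := congrArg Fin.val hij
  simp only [Aperm, apfun] at h
  have hi := i.2; have hj := j.2
  apply Fin.ext
  split_ifs at h <;> omega

lemma Bperm_bij {n m : ℕ} (hm : m+1 < n) : Function.Bijective (Bperm n m hm) := by
  rw [← Finite.injective_iff_bijective]
  intro i j hij
  have h := congrArg Fin.val hij
  simp only [Bperm, bpfun] at h
  have hi := i.2; have hj := j.2
  apply Fin.ext
  split_ifs at h <;> omega

lemma Aperm_mono1 {n a : ℕ} (ha : a < n) :
    ∀ i j : Fin n, 1 ≤ (i:ℕ) → i < j → Aperm n a ha i < Aperm n a ha j := by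
  intro i j h1 hij
  rw [Fin.lt_def] at hij ⊢
  simp only [Aperm, apfun]
  have hj := j.2
  split_ifs <;> omega

lemma Bperm_mono2 {n m : ℕ} (hm : m+1 < n) :
    ∀ i j : Fin n, 2 ≤ (i:ℕ) → i < j → Bperm n m hm i < Bperm n m hm j := by
  intro i j h1 hij
  rw [Fin.lt_def] at hij ⊢
  simp only [Bperm, bpfun]
  have hj := j.2
  split_ifs <;> omega

lemma avoids132_consec {n : ℕ} (hn : 2 ≤ n) {π : Fin n → Fin n}
    (h01 : (π ⟨1, by omega⟩ : ℕ) = (π ⟨0, by omega⟩ : ℕ) + 1)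
    (h2 : ∀ a b : Fin n, 2 ≤ (a:ℕ) → a < b → π a < π b) : Avoids π ![1,3,2] := by
  rintro ⟨f, hf, hrel⟩
  have e02 : π (f 0) < π (f 2) := (hrel 0 2).mp (by decide)
  have e21 : π (f 2) < π (f 1) := (hrel 2 1).mp (by decide)
  by_cases hc : 2 ≤ (f 1 : ℕ)
  · exact absurd e21 (lt_asymm (h2 (f 1) (f 2) hc (hf (by decide))))
  · have hf01 : f 0 < f 1 := hf (by decide)
    rw [Fin.lt_def] at hf01
    have h0 : f 0 = ⟨0, by omega⟩ := Fin.ext (show (f 0 : ℕ) = 0 by omega)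
    have h1 : f 1 = ⟨1, by omega⟩ := Fin.ext (show (f 1 : ℕ) = 1 by omega)
    rw [h0] at e02; rw [h1] at e21
    rw [Fin.lt_def] at e02 e21
    omega

lemma avoids321_consec {n : ℕ} (hn : 2 ≤ n) {π : Fin n → Fin n}
    (h01 : (π ⟨1, by omega⟩ : ℕ) = (π ⟨0, by omega⟩ : ℕ) + 1)
    (h2 : ∀ a b : Fin n, 2 ≤ (a:ℕ) → a < b → π a < π b) : Avoids π ![3,2,1] := by
  rintro ⟨f, hf, hrel⟩
  have e10 : π (f 1) < π (f 0) := (hrel 1 0).mp (by decide)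
  have e21 : π (f 2) < π (f 1) := (hrel 2 1).mp (by decide)
  by_cases hc : 2 ≤ (f 1 : ℕ)
  · exact absurd e21 (lt_asymm (h2 (f 1) (f 2) hc (hf (by decide))))
  · have hf01 : f 0 < f 1 := hf (by decide)
    rw [Fin.lt_def] at hf01
    have h0 : f 0 = ⟨0, by omega⟩ := Fin.ext (show (f 0 : ℕ) = 0 by omega)
    have h1 : f 1 = ⟨1, by omega⟩ := Fin.ext (show (f 1 : ℕ) = 1 by omega)
    rw [h0] at e10; rw [h1] at e10
    rw [Fin.lt_def] at e10
    omega

lemma mk3_strictMono {n : ℕ} {a b c : Fin n} (hab : a < b) (hbc : b < c) :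
    StrictMono ![a, b, c] := by
  rw [Fin.strictMono_iff_lt_succ]
  intro i
  fin_cases i <;> simpa

lemma mk4_strictMono {n : ℕ} {a b c d : Fin n} (hab : a < b) (hbc : b < c) (hcd : c < d) :
    StrictMono ![a, b, c, d] := by
  rw [Fin.strictMono_iff_lt_succ]
  intro i
  fin_cases i <;> simpa

lemma claimB {n : ℕ} (hn : 2 ≤ n) {π : Fin n → Fin n} (hb : Function.Bijective π)
    (h321 : Avoids π ![3,2,1]) (h10 : π ⟨1, by omega⟩ < π ⟨0, by omega⟩) :
    (π ⟨1, by omega⟩ : ℕ) = 0 := by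
  by_contra hc
  set z0 : Fin n := ⟨0, by omega⟩
  set z1 : Fin n := ⟨1, by omega⟩
  obtain ⟨j, hj⟩ := hb.2 ⟨(π z1 : ℕ) - 1, by have := (π z1).2; omega⟩
  have hjv : (π j : ℕ) = (π z1 : ℕ) - 1 := by rw [hj]
  have hjz0 : j ≠ z0 := by
    intro h; rw [h] at hjv; rw [Fin.lt_def] at h10; omega
  have hjz1 : j ≠ z1 := by
    intro h; rw [h] at hjv; omega
  have hj2 : 2 ≤ (j : ℕ) := by
    rcases Nat.lt_or_ge (j : ℕ) 2 with h | h
    · interval_cases hjj : (j : ℕ)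
      · exact absurd (Fin.ext hjj) hjz0
      · exact absurd (Fin.ext hjj) hjz1
    · exact h
  apply h321
  refine ⟨![z0, z1, j], mk3_strictMono (Fin.mk_lt_mk.mpr one_pos)
    (Fin.lt_def.mpr (show (1:ℕ) < (j:ℕ) by omega)), ?_⟩
  have v10 : (π z1 : ℕ) < (π z0 : ℕ) := Fin.lt_def.mp h10
  intro s t
  fin_cases s <;> fin_cases t <;>
    simp only [show (⟨2, by omega⟩ : Fin 3) = 2 from rfl, Matrix.cons_val_zero,
      Matrix.cons_val_one, Matrix.cons_val_two, Matrix.head_cons, Matrix.tail_cons,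
      Fin.zero_eta, Fin.mk_one, Fin.lt_def, Function.comp_apply, Fin.isValue] <;> omega

lemma claimC {n : ℕ} (hn : 2 ≤ n) {π : Fin n → Fin n} (hb : Function.Bijective π)
    (h132 : Avoids π ![1,3,2]) (h01 : π ⟨0, by omega⟩ < π ⟨1, by omega⟩) :
    (π ⟨1, by omega⟩ : ℕ) = (π ⟨0, by omega⟩ : ℕ) + 1 := by
  by_contra hc
  set z0 : Fin n := ⟨0, by omega⟩
  set z1 : Fin n := ⟨1, by omega⟩
  have v01 : (π z0 : ℕ) < (π z1 : ℕ) := Fin.lt_def.mp h01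
  obtain ⟨j, hj⟩ := hb.2 ⟨(π z0 : ℕ) + 1, by have := (π z1).2; omega⟩
  have hjv : (π j : ℕ) = (π z0 : ℕ) + 1 := by rw [hj]
  have hjz0 : j ≠ z0 := by intro h; rw [h] at hjv; omega
  have hjz1 : j ≠ z1 := by intro h; rw [h] at hjv; omega
  have hj2 : 2 ≤ (j : ℕ) := by
    rcases Nat.lt_or_ge (j : ℕ) 2 with h | h
    · interval_cases hjj : (j : ℕ)
      · exact absurd (Fin.ext hjj) hjz0
      · exact absurd (Fin.ext hjj) hjz1
    · exact h
  apply h132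
  refine ⟨![z0, z1, j], mk3_strictMono (Fin.mk_lt_mk.mpr one_pos)
    (Fin.lt_def.mpr (show (1:ℕ) < (j:ℕ) by omega)), ?_⟩
  intro s t
  fin_cases s <;> fin_cases t <;>
    simp only [show (⟨2, by omega⟩ : Fin 3) = 2 from rfl, Matrix.cons_val_zero,
      Matrix.cons_val_one, Matrix.cons_val_two, Matrix.head_cons, Matrix.tail_cons,
      Fin.zero_eta, Fin.mk_one, Fin.lt_def, Function.comp_apply, Fin.isValue] <;> omega

lemma claimA {n : ℕ} (hn : 2 ≤ n) {π : Fin n → Fin n} (hb : Function.Bijective π)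
    (h132 : Avoids π ![1,3,2]) (h321 : Avoids π ![3,2,1]) (h2341 : Avoids π ![2,3,4,1]) :
    ∀ i j : Fin n, 2 ≤ (i:ℕ) → i < j → π i < π j := by
  intro i j h2i hij
  by_contra hc
  have hji : (π j : ℕ) < (π i : ℕ) := by
    have hne : π i ≠ π j := fun e => absurd (hb.1 e) (ne_of_lt hij)
    rw [Fin.lt_def] at hc
    have := Fin.val_ne_of_ne hne
    omega
  set z0 : Fin n := ⟨0, by omega⟩
  set z1 : Fin n := ⟨1, by omega⟩
  have h0i : z0 < i := Fin.lt_def.mpr (show (0:ℕ) < (i:ℕ) by omega)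
  have h1i : z1 < i := Fin.lt_def.mpr (show (1:ℕ) < (i:ℕ) by omega)
  have h01 : z0 < z1 := Fin.mk_lt_mk.mpr one_pos
  have hijv : (i:ℕ) < (j:ℕ) := Fin.lt_def.mp hij
  -- for w ∈ {z0, z1} : π j < π w < π i
  have key : ∀ w : Fin n, w < i → (π j : ℕ) < (π w : ℕ) ∧ (π w : ℕ) < (π i : ℕ) := by
    intro w hwi
    have hwj : w < j := lt_trans hwi hij
    have hwi' : w ≠ i := ne_of_lt hwi
    have hwj' : w ≠ j := ne_of_lt hwj
    have n1 : (π w : ℕ) ≠ (π i : ℕ) := fun e => hwi' (hb.1 (Fin.ext e))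
    have n2 : (π w : ℕ) ≠ (π j : ℕ) := fun e => hwj' (hb.1 (Fin.ext e))
    rcases Nat.lt_or_ge (π w : ℕ) (π j : ℕ) with hlt | hge
    · -- 132 occurrence at (w, i, j) : π w < π j < π i
      exfalso; apply h132
      refine ⟨![w, i, j], mk3_strictMono hwi hij, ?_⟩
      intro s t
      fin_cases s <;> fin_cases t <;>
        simp only [show (⟨2, by omega⟩ : Fin 3) = 2 from rfl, Matrix.cons_val_zero,
          Matrix.cons_val_one, Matrix.cons_val_two, Matrix.head_cons, Matrix.tail_cons,
          Fin.zero_eta, Fin.mk_one, Fin.lt_def, Function.comp_apply, Fin.isValue] <;> omega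
    · rcases Nat.lt_or_ge (π i : ℕ) (π w : ℕ) with hlt2 | hge2
      · -- 321 occurrence at (w, i, j) : π w > π i > π j
        exfalso; apply h321
        refine ⟨![w, i, j], mk3_strictMono hwi hij, ?_⟩
        intro s t
        fin_cases s <;> fin_cases t <;>
          simp only [show (⟨2, by omega⟩ : Fin 3) = 2 from rfl, Matrix.cons_val_zero,
            Matrix.cons_val_one, Matrix.cons_val_two, Matrix.head_cons, Matrix.tail_cons,
            Fin.zero_eta, Fin.mk_one, Fin.lt_def, Function.comp_apply, Fin.isValue] <;> omega
      · exact ⟨by omega, by omega⟩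
  obtain ⟨k0a, k0b⟩ := key z0 h0i
  obtain ⟨k1a, k1b⟩ := key z1 h1i
  have h01v : (π z0 : ℕ) < (π z1 : ℕ) := by
    have n3 : (π z0 : ℕ) ≠ (π z1 : ℕ) :=
      fun e => absurd (hb.1 (Fin.ext e)) (ne_of_lt h01)
    rcases Nat.lt_or_ge (π z0 : ℕ) (π z1 : ℕ) with h | h
    · exact h
    · -- 321 at (z0, z1, j) : π z0 > π z1 > π j
      exfalso; apply h321
      refine ⟨![z0, z1, j], mk3_strictMono h01 (lt_trans h1i hij), ?_⟩
      intro s t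
      fin_cases s <;> fin_cases t <;>
        simp only [show (⟨2, by omega⟩ : Fin 3) = 2 from rfl, Matrix.cons_val_zero,
          Matrix.cons_val_one, Matrix.cons_val_two, Matrix.head_cons, Matrix.tail_cons,
          Fin.zero_eta, Fin.mk_one, Fin.lt_def, Function.comp_apply, Fin.isValue] <;> omega
  -- 2341 at (z0, z1, i, j)
  apply h2341
  refine ⟨![z0, z1, i, j], mk4_strictMono h01 h1i hij, ?_⟩
  intro s t
  fin_cases s <;> fin_cases t <;>
    simp only [show (⟨2, by omega⟩ : Fin 4) = 2 from rfl,
      show (⟨3, by omega⟩ : Fin 4) = 3 from rfl, Matrix.cons_val_zero,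
      Matrix.cons_val_one, Matrix.cons_val_two, Matrix.cons_val_three, Matrix.head_cons,
      Matrix.tail_cons, Fin.zero_eta, Fin.mk_one, Fin.lt_def, Function.comp_apply,
      Fin.isValue] <;> omega

lemma determined {n : ℕ} (hn : 2 ≤ n) {π σ : Fin n → Fin n}
    (hπ : Function.Bijective π) (hσ : Function.Bijective σ)
    (mπ : ∀ a b : Fin n, 2 ≤ (a:ℕ) → a < b → π a < π b)
    (mσ : ∀ a b : Fin n, 2 ≤ (a:ℕ) → a < b → σ a < σ b)
    (h0 : π ⟨0, by omega⟩ = σ ⟨0, by omega⟩) (h1 : π ⟨1, by omega⟩ = σ ⟨1, by omega⟩) :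
    π = σ := by
  set z0 : Fin n := ⟨0, by omega⟩
  set z1 : Fin n := ⟨1, by omega⟩
  have hz : z0 ≠ z1 := by simp [z0, z1, Fin.ext_iff]
  have hpne : π z0 ≠ π z1 := fun e => hz (hπ.1 e)
  set s : Finset (Fin n) := Finset.univ \ {π z0, π z1} with hs
  have hcard : s.card = n - 2 := by
    rw [hs, Finset.card_sdiff_of_subset (Finset.subset_univ _), Finset.card_univ, Fintype.card_fin,
      Finset.card_pair hpne]
  have key : ∀ (τ : Fin n → Fin n), Function.Bijective τ →
      (∀ a b : Fin n, 2 ≤ (a:ℕ) → a < b → τ a < τ b) → τ z0 = π z0 → τ z1 = π z1 →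
      (fun t : Fin (n-2) => τ ⟨(t:ℕ)+2, by have := t.2; omega⟩) = ⇑(s.orderEmbOfFin hcard) := by
    intro τ hτ mτ e0 e1
    apply Finset.orderEmbOfFin_unique hcard
    · intro x
      simp only [hs, Finset.mem_sdiff, Finset.mem_univ, Finset.mem_insert,
        Finset.mem_singleton, true_and]
      push_neg
      constructor
      · intro e
        rw [← e0] at e
        have := congrArg Fin.val (hτ.1 e)
        simp [z0] at this
      · intro e
        rw [← e1] at e
        have := congrArg Fin.val (hτ.1 e)
        simp [z1] at this
    · intro x y hxy
      apply mτ
      · show 2 ≤ (x:ℕ) + 2; omega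
      · exact Fin.mk_lt_mk.mpr (by have := Fin.lt_def.mp hxy; omega)
  have e1' := key π hπ mπ rfl rfl
  have e2' := key σ hσ mσ h0.symm h1.symm
  have efin := e1'.trans e2'.symm
  funext i
  rcases Nat.lt_or_ge (i:ℕ) 2 with h | h
  · interval_cases hi : (i:ℕ)
    · have hz0 : i = z0 := Fin.ext hi
      rw [hz0]; exact h0
    · have hz1 : i = z1 := Fin.ext hi
      rw [hz1]; exact h1
  · have hi2 : (i:ℕ) - 2 < n - 2 := by have := i.2; omega
    have hieq : i = ⟨((⟨(i:ℕ)-2, hi2⟩ : Fin (n-2)) : ℕ) + 2, by have := i.2; omega⟩ :=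
      Fin.ext (by show (i:ℕ) = (i:ℕ) - 2 + 2; omega)
    rw [hieq]
    exact congrFun efin ⟨(i:ℕ)-2, hi2⟩

lemma Aperm_mem {n a : ℕ} (hn : 2 ≤ n) (ha : a < n) :
    Aperm n a ha ∈ TSS132 n ∧ Avoids (Aperm n a ha) ![3,2,1] := by
  have hm := Aperm_mono1 (n := n) (a := a) ha
  refine ⟨⟨Aperm_bij ha, ?_, ?_, ?_⟩, ?_⟩
  · exact avoids_of_monoOn hm 1 2 (by decide) (by decide) (by decide)
  · exact avoids_of_monoOn hm 2 3 (by decide) (by decide) (by decide)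
  · exact avoids_of_monoOn hm 2 3 (by decide) (by decide) (by decide)
  · exact avoids_of_monoOn hm 1 2 (by decide) (by decide) (by decide)

lemma Bperm_mem {n m : ℕ} (hn : 2 ≤ n) (hm : m+1 < n) :
    Bperm n m hm ∈ TSS132 n ∧ Avoids (Bperm n m hm) ![3,2,1] := by
  have hmo := Bperm_mono2 (n := n) (m := m) hm
  have h01 : (Bperm n m hm ⟨1, by omega⟩ : ℕ) = (Bperm n m hm ⟨0, by omega⟩ : ℕ) + 1 := by
    simp [Bperm, bpfun]
  refine ⟨⟨Bperm_bij hm, ?_, ?_, ?_⟩, ?_⟩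
  · exact avoids132_consec hn h01 hmo
  · exact avoids_of_monoOn hmo 2 3 (by decide) (by decide) (by decide)
  · exact avoids_of_monoOn hmo 2 3 (by decide) (by decide) (by decide)
  · exact avoids321_consec hn h01 hmo

theorem stmt_12 (n : ℕ) (hn : 2 ≤ n) :
    Nat.card ↥{π ∈ TSS132 n | Avoids π ![3,2,1]} = 2*n - 2 := by
  set S := {π ∈ TSS132 n | Avoids π ![3,2,1]} with hS
  have hAS : ∀ (a : ℕ) (ha : a < n), Aperm n a ha ∈ S := fun a ha => Aperm_mem hn ha
  have hBS : ∀ (m : ℕ) (hm : m+1 < n), Bperm n m hm ∈ S := fun m hm => Bperm_mem hn hm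
  let G : Fin (n-1) ⊕ Fin (n-1) → ↥S := fun x =>
    match x with
    | .inl a => ⟨Aperm n ((a:ℕ)+1) (by have := a.2; omega), hAS _ _⟩
    | .inr m => ⟨Bperm n (m:ℕ) (by have := m.2; omega), hBS _ _⟩
  have hGbij : Function.Bijective G := by
    constructor
    · rintro (a | a) (b | b) h
      · simp only [G, Subtype.mk.injEq] at h
        have hv := congrArg Fin.val (congrFun h ⟨0, by omega⟩)
        simp [Aperm, apfun] at hv
        exact congrArg Sum.inl (Fin.ext (by omega))
      · simp only [G, Subtype.mk.injEq] at h
        have hv := congrArg Fin.val (congrFun h ⟨1, by omega⟩)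
        simp [Aperm, Bperm, apfun, bpfun] at hv
      · simp only [G, Subtype.mk.injEq] at h
        have hv := congrArg Fin.val (congrFun h ⟨1, by omega⟩)
        simp [Aperm, Bperm, apfun, bpfun] at hv
      · simp only [G, Subtype.mk.injEq] at h
        have hv := congrArg Fin.val (congrFun h ⟨0, by omega⟩)
        simp [Bperm, bpfun] at hv
        exact congrArg Sum.inr (Fin.ext hv)
    · rintro ⟨π, hπS⟩
      obtain ⟨⟨hb, h132, h2341, h3241⟩, h321⟩ := hπS
      have mπ := claimA hn hb h132 h321 h2341
      have hne : π ⟨0, by omega⟩ ≠ π ⟨1, by omega⟩ := by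
        intro e
        have := congrArg Fin.val (hb.1 e)
        simp at this
      rcases lt_or_gt_of_ne hne with hlt | hgt
      · -- Bperm case
        have h01 := claimC hn hb h132 hlt
        have hmlt : (π ⟨0, by omega⟩ : ℕ) + 1 < n := by
          have := (π ⟨1, by omega⟩).2; omega
        refine ⟨.inr ⟨(π ⟨0, by omega⟩ : ℕ), by omega⟩, ?_⟩
        apply Subtype.ext
        refine (determined hn hb (Bperm_bij hmlt) mπ (Bperm_mono2 hmlt) ?_ ?_).symm
        · exact Fin.ext (by simp [Bperm, bpfun])
        · exact Fin.ext (by simp [Bperm, bpfun]; omega)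
      · -- Aperm case
        have h10 := claimB hn hb h321 hgt
        have ha1 : 1 ≤ (π ⟨0, by omega⟩ : ℕ) := by
          have := Fin.lt_def.mp hgt; omega
        have han : ((π ⟨0, by omega⟩ : ℕ) - 1) + 1 < n := by
          have := (π ⟨0, by omega⟩).2; omega
        refine ⟨.inl ⟨(π ⟨0, by omega⟩ : ℕ) - 1, by omega⟩, ?_⟩
        apply Subtype.ext
        refine (determined hn hb (Aperm_bij han)
          mπ (fun a b h2 => Aperm_mono1 han a b (by omega)) ?_ ?_).symm
        · exact Fin.ext (by simp [Aperm, apfun]; omega)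
        · exact Fin.ext (by simp [Aperm, apfun]; omega)
  have hcards := Nat.card_eq_of_bijective G hGbij
  rw [← hcards, Nat.card_sum, Nat.card_eq_fintype_card, Fintype.card_fin]
  omega
end

section
/- For every permutation π of {1,...,n} avoiding the pattern 132, the number of right-to-left maxima of π equals the alternating sum ∑_{d=1}^{n} (-1)^{d+1} · (number of increasing subsequences of π of length d). -/
attribute [local instance] Classical.propDecidable

section Aux
variable {n : ℕ} {π : Fin n → Fin n}

/-- right-to-left maximum -/
def RLMax (π : Fin n → Fin n) (i : Fin n) : Prop := ∀ j, i < j → π j < π i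

/-- π is strictly increasing on s -/
def IncOn (π : Fin n → Fin n) (s : Finset (Fin n)) : Prop :=
  ∀ a ∈ s, ∀ b ∈ s, a < b → π a < π b

lemma exists_rlmax_ge (hinj : Function.Injective π) (i : Fin n) :
    ∃ m, i ≤ m ∧ π i ≤ π m ∧ RLMax π m := by
  obtain ⟨m, hm, hmax⟩ := Finset.exists_max_image
    (Finset.univ.filter (fun j => i ≤ j)) π ⟨i, by simp⟩
  have him : i ≤ m := (Finset.mem_filter.mp hm).2
  refine ⟨m, him, hmax i (by simp), fun j hj => ?_⟩
  have hje : π j ≤ π m := hmax j (by simp [le_trans him hj.le])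
  exact lt_of_le_of_ne hje (fun h => absurd (hinj h) (ne_of_gt hj))

/-- the least right-to-left maximum ≥ i -/
noncomputable def Mof (hinj : Function.Injective π) (i : Fin n) : Fin n :=
  (Finset.univ.filter (fun m => i ≤ m ∧ RLMax π m)).min'
    (by obtain ⟨m, h1, _, h2⟩ := exists_rlmax_ge hinj i; exact ⟨m, by simp [h1, h2]⟩)

lemma Mof_ge (hinj : Function.Injective π) (i : Fin n) : i ≤ Mof hinj i := by
  have := Finset.min'_mem (Finset.univ.filter (fun m => i ≤ m ∧ RLMax π m))
    (by obtain ⟨m, h1, _, h2⟩ := exists_rlmax_ge hinj i; exact ⟨m, by simp [h1, h2]⟩)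
  exact (Finset.mem_filter.mp this).2.1

lemma Mof_rlmax (hinj : Function.Injective π) (i : Fin n) : RLMax π (Mof hinj i) := by
  have := Finset.min'_mem (Finset.univ.filter (fun m => i ≤ m ∧ RLMax π m))
    (by obtain ⟨m, h1, _, h2⟩ := exists_rlmax_ge hinj i; exact ⟨m, by simp [h1, h2]⟩)
  exact (Finset.mem_filter.mp this).2.2

lemma Mof_min (hinj : Function.Injective π) (i : Fin n) {m : Fin n}
    (h1 : i ≤ m) (h2 : RLMax π m) : Mof hinj i ≤ m :=
  Finset.min'_le _ m (by simp [h1, h2])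

/-- Lemma B: every j with i ≤ j < Mof i has π j < π (Mof i). -/
lemma lt_Mof_val (hinj : Function.Injective π) {i j : Fin n}
    (hij : i ≤ j) (hjm : j < Mof hinj i) : π j < π (Mof hinj i) := by
  by_contra h
  push_neg at h
  have hne : π (Mof hinj i) ≠ π j := fun e => absurd (hinj e) (ne_of_gt hjm)
  have hlt : π (Mof hinj i) < π j := lt_of_le_of_ne h hne
  obtain ⟨k, hjk, hπjk, hk⟩ := exists_rlmax_ge hinj j
  have hmk : Mof hinj i ≤ k := Mof_min hinj i (le_trans hij hjk) hk
  have hMk : π (Mof hinj i) < π k := lt_of_lt_of_le hlt hπjk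
  have hne2 : Mof hinj i ≠ k := fun e => by rw [e] at hMk; exact lt_irrefl _ hMk
  have : π k < π (Mof hinj i) := Mof_rlmax hinj i k (lt_of_le_of_ne hmk hne2)
  exact lt_irrefl _ (hMk.trans this)

end Aux

section Aux2
variable {n : ℕ} {π : Fin n → Fin n}

lemma contains132_of (hi : Function.Injective π) {a b c : Fin n}
    (hab : a < b) (hbc : b < c) (h1 : π a < π c) (h2 : π c < π b) :
    Contains π ![1, 3, 2] := by
  refine ⟨![a, b, c], ?_, ?_⟩
  · intro i j hij
    fin_cases i <;> fin_cases j <;>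
      simp_all [Matrix.cons_val_zero, Matrix.cons_val_one] <;> omega
  · intro i j
    have h3 : π a < π b := h1.trans h2
    fin_cases i <;> fin_cases j <;>
      simp [Matrix.cons_val_zero, Matrix.cons_val_one, h1, h2, h3,
        le_of_lt, not_lt_of_gt, lt_irrefl] <;>
      first
        | exact not_lt_of_gt h1 | exact not_lt_of_gt h2 | exact not_lt_of_gt h3

/-- Lemma A: every element of a nonempty increasing set `C` is ≤ the least RL max
above `min C`. -/
lemma le_Mof_of_mem (hinj : Function.Injective π) (hav : Avoids π ![1,3,2])
    {C : Finset (Fin n)} (hC : C.Nonempty) (hinc : IncOn π C) {k : Fin n}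
    (hk : k ∈ C) : k ≤ Mof hinj (C.min' hC) := by
  set i₁ := C.min' hC with hi₁
  set m := Mof hinj i₁ with hm
  by_contra h
  push_neg at h  -- h : m < k
  have hi₁m : i₁ ≤ m := Mof_ge hinj i₁
  have hi₁k : i₁ < k := lt_of_le_of_lt hi₁m h
  have hπik : π i₁ < π k := hinc i₁ (Finset.min'_mem _ _) k hk hi₁k
  have hπkm : π k < π m := Mof_rlmax hinj i₁ k h
  rcases eq_or_lt_of_le hi₁m with he | hlt
  · rw [← he] at hπkm; exact lt_irrefl _ (hπik.trans hπkm)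
  · exact hav (contains132_of hinj hlt h hπik hπkm)

end Aux2

section Aux3
variable {n : ℕ} {π : Fin n → Fin n}
variable (hinj : Function.Injective π)

lemma incOn_insert (hav : Avoids π ![1,3,2]) {C : Finset (Fin n)} (hC : C.Nonempty) (hinc : IncOn π C) :
    IncOn π (insert (Mof hinj (C.min' hC)) C) := by
  set m := Mof hinj (C.min' hC) with hm
  intro a ha b hb hab
  rcases Finset.mem_insert.mp ha with rfl | ha'
  · rcases Finset.mem_insert.mp hb with rfl | hb'
    · exact absurd hab (lt_irrefl _)
    · exact absurd (lt_of_lt_of_le hab (le_Mof_of_mem hinj hav hC hinc hb')) (lt_irrefl _)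
  · rcases Finset.mem_insert.mp hb with rfl | hb'
    · exact lt_Mof_val hinj (Finset.min'_le _ _ ha') hab
    · exact hinc a ha' b hb' hab

lemma min'_insert_Mof {C : Finset (Fin n)} (hC : C.Nonempty) :
    (insert (Mof hinj (C.min' hC)) C).min' (Finset.insert_nonempty _ _) = C.min' hC := by
  refine le_antisymm (Finset.min'_le _ _ (Finset.mem_insert_of_mem (Finset.min'_mem _ _))) ?_
  refine Finset.le_min' _ _ _ fun y hy => ?_
  rcases Finset.mem_insert.mp hy with rfl | hy'
  · exact Mof_ge hinj _
  · exact Finset.min'_le _ _ hy'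

lemma eq_singleton_of_min'_eq_Mof (hav : Avoids π ![1,3,2]) {C : Finset (Fin n)}
    (hC : C.Nonempty) (hinc : IncOn π C) (hmem : Mof hinj (C.min' hC) ∈ C)
    (he : C.min' hC = Mof hinj (C.min' hC)) : C = {Mof hinj (C.min' hC)} := by
  apply Finset.eq_singleton_iff_unique_mem.mpr
  refine ⟨hmem, fun x hx => le_antisymm (le_Mof_of_mem hinj hav hC hinc hx) ?_⟩
  rw [← he]; exact Finset.min'_le _ _ hx

lemma erase_facts (hav : Avoids π ![1,3,2]) {C : Finset (Fin n)}
    (hC : C.Nonempty) (hinc : IncOn π C) (hmem : Mof hinj (C.min' hC) ∈ C)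
    (hne : C ≠ {Mof hinj (C.min' hC)}) :
    (C.erase (Mof hinj (C.min' hC))).Nonempty ∧
    ∀ hE : (C.erase (Mof hinj (C.min' hC))).Nonempty,
      (C.erase (Mof hinj (C.min' hC))).min' hE = C.min' hC := by
  set m := Mof hinj (C.min' hC) with hm
  have hlt : C.min' hC < m := by
    rcases lt_or_eq_of_le (Mof_ge hinj (C.min' hC)) with h | h'
    · exact h
    · exact absurd (eq_singleton_of_min'_eq_Mof hinj hav hC hinc hmem h') hne
  have hmin_mem : C.min' hC ∈ C.erase m :=
    Finset.mem_erase.mpr ⟨ne_of_lt hlt, Finset.min'_mem _ _⟩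
  refine ⟨⟨_, hmin_mem⟩, fun hE => le_antisymm (Finset.min'_le _ _ hmin_mem) ?_⟩
  exact Finset.le_min' _ _ _ fun y hy => Finset.min'_le _ _ (Finset.mem_of_mem_erase hy)

end Aux3

section Aux4
variable {n : ℕ} {π : Fin n → Fin n}
variable (hinj : Function.Injective π)

lemma min'_congr {α : Type*} [LinearOrder α] {s t : Finset α} (h : s = t)
    (hs : s.Nonempty) (ht : t.Nonempty) : s.min' hs = t.min' ht := by subst h; rfl

/-- The sign-reversing involution: toggle the least RL max above `min C`. -/
noncomputable def tog (C : Finset (Fin n)) (hC : C.Nonempty) : Finset (Fin n) :=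
  if Mof hinj (C.min' hC) ∈ C then C.erase (Mof hinj (C.min' hC))
  else insert (Mof hinj (C.min' hC)) C

lemma tog_nonempty (hav : Avoids π ![1,3,2]) {C : Finset (Fin n)} (hC : C.Nonempty)
    (hinc : IncOn π C) (hns : ¬ ∃ m, RLMax π m ∧ C = {m}) : (tog hinj C hC).Nonempty := by
  unfold tog
  split_ifs with hm
  · exact (erase_facts hinj hav hC hinc hm
      (fun h => hns ⟨_, Mof_rlmax hinj _, h⟩)).1
  · exact Finset.insert_nonempty _ _

lemma tog_incOn (hav : Avoids π ![1,3,2]) {C : Finset (Fin n)} (hC : C.Nonempty)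
    (hinc : IncOn π C) : IncOn π (tog hinj C hC) := by
  unfold tog
  split_ifs with hm
  · exact fun a ha b hb hab =>
      hinc a (Finset.mem_of_mem_erase ha) b (Finset.mem_of_mem_erase hb) hab
  · exact incOn_insert hinj hav hC hinc

lemma tog_ne {C : Finset (Fin n)} (hC : C.Nonempty) : tog hinj C hC ≠ C := by
  unfold tog
  split_ifs with hm
  · exact fun h => (Finset.erase_eq_self.mp h) hm
  · exact fun h => hm (Finset.insert_eq_self.mp h)

lemma tog_sign {C : Finset (Fin n)} (hC : C.Nonempty) :
    (-1 : ℤ)^(C.card+1) + (-1 : ℤ)^((tog hinj C hC).card+1) = 0 := by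
  obtain ⟨k, hk⟩ : ∃ k, C.card = k + 1 :=
    ⟨C.card - 1, by have := Finset.card_pos.mpr hC; omega⟩
  unfold tog
  split_ifs with hm
  · rw [Finset.card_erase_of_mem hm, hk]
    simp only [Nat.add_sub_cancel]
    rw [pow_succ]; ring
  · rw [Finset.card_insert_of_notMem hm, hk]
    rw [pow_succ (-1 : ℤ) (k + 1 + 1)]; ring

lemma tog_not_single (hav : Avoids π ![1,3,2]) {C : Finset (Fin n)} (hC : C.Nonempty)
    (hinc : IncOn π C) (hns : ¬ ∃ m, RLMax π m ∧ C = {m}) :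
    ¬ ∃ m', RLMax π m' ∧ tog hinj C hC = {m'} := by
  unfold tog
  split_ifs with hm
  · rintro ⟨m', hR, hEq⟩
    have hCne : C ≠ {Mof hinj (C.min' hC)} := fun h => hns ⟨_, Mof_rlmax hinj _, h⟩
    obtain ⟨hEne, hEmin⟩ := erase_facts hinj hav hC hinc hm hCne
    have hm'E : m' ∈ C.erase (Mof hinj (C.min' hC)) := hEq ▸ Finset.mem_singleton_self m'
    have hm'C : m' ∈ C := Finset.mem_of_mem_erase hm'E
    have hm'ne : m' ≠ Mof hinj (C.min' hC) := (Finset.mem_erase.mp hm'E).1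
    have hle : m' ≤ Mof hinj (C.min' hC) := le_Mof_of_mem hinj hav hC hinc hm'C
    have hmin : C.min' hC = m' := by
      rw [← hEmin hEne, min'_congr hEq hEne ⟨m', Finset.mem_singleton_self m'⟩,
        Finset.min'_singleton]
    have : Mof hinj (C.min' hC) ≤ m' := by
      rw [hmin]; exact Mof_min hinj m' le_rfl hR
    exact hm'ne (le_antisymm hle this)
  · rintro ⟨m', hR, hEq⟩
    have h1 : C.card + 1 = 1 := by
      rw [← Finset.card_insert_of_notMem hm, hEq, Finset.card_singleton]
    have := Finset.card_pos.mpr hC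
    omega

lemma tog_tog (hav : Avoids π ![1,3,2]) {C : Finset (Fin n)} (hC : C.Nonempty)
    (hinc : IncOn π C) (hns : ¬ ∃ m, RLMax π m ∧ C = {m})
    (hT : (tog hinj C hC).Nonempty) : tog hinj (tog hinj C hC) hT = C := by
  by_cases hm : Mof hinj (C.min' hC) ∈ C
  · have hCne : C ≠ {Mof hinj (C.min' hC)} := fun h => hns ⟨_, Mof_rlmax hinj _, h⟩
    obtain ⟨hEne, hEmin⟩ := erase_facts hinj hav hC hinc hm hCne
    have e1 : tog hinj C hC = C.erase (Mof hinj (C.min' hC)) := if_pos hm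
    have key : ∀ (D : Finset (Fin n)) (hD : D.Nonempty),
        D = C.erase (Mof hinj (C.min' hC)) → tog hinj D hD = C := by
      intro D hD h
      subst h
      unfold tog
      rw [hEmin hD, if_neg (Finset.notMem_erase _ _), Finset.insert_erase hm]
    exact key _ hT e1
  · have e1 : tog hinj C hC = insert (Mof hinj (C.min' hC)) C := if_neg hm
    have key : ∀ (D : Finset (Fin n)) (hD : D.Nonempty),
        D = insert (Mof hinj (C.min' hC)) C → tog hinj D hD = C := by
      intro D hD h
      subst h
      unfold tog
      rw [min'_insert_Mof hinj hC, if_pos (Finset.mem_insert_self _ _),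
        Finset.erase_insert hm]
    exact key _ hT e1

end Aux4

section Aux5
variable {n : ℕ} (π : Fin n → Fin n)

noncomputable def subseqEquiv (d : ℕ) :
    {f : Fin d → Fin n // StrictMono f ∧ StrictMono (π ∘ f)} ≃
    {s : Finset (Fin n) // s.card = d ∧ IncOn π s} where
  toFun := fun ⟨f, hf, hπf⟩ => ⟨Finset.univ.image f,
    by rw [Finset.card_image_of_injective _ hf.injective, Finset.card_univ, Fintype.card_fin],
    by
      intro a ha b hb hab
      obtain ⟨i, -, rfl⟩ := Finset.mem_image.mp ha
      obtain ⟨j, -, rfl⟩ := Finset.mem_image.mp hb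
      exact hπf (hf.lt_iff_lt.mp hab)⟩
  invFun := fun ⟨s, hs, hinc⟩ => ⟨s.orderEmbOfFin hs,
    (s.orderEmbOfFin hs).strictMono,
    fun i j hij => hinc _ (Finset.orderEmbOfFin_mem _ _ _) _ (Finset.orderEmbOfFin_mem _ _ _)
      ((s.orderEmbOfFin hs).strictMono hij)⟩
  left_inv := fun ⟨f, hf, hπf⟩ => Subtype.ext
    (Finset.orderEmbOfFin_unique _
      (fun x => Finset.mem_image_of_mem f (Finset.mem_univ x)) hf).symm
  right_inv := fun ⟨s, hs, hinc⟩ => Subtype.ext (by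
    apply Finset.coe_injective
    rw [Finset.coe_image, Finset.coe_univ, Set.image_univ, Finset.range_orderEmbOfFin])

lemma card_subseq (d : ℕ) :
    Nat.card {f : Fin d → Fin n // StrictMono f ∧ StrictMono (π ∘ f)} =
    (Finset.univ.filter (fun s : Finset (Fin n) => s.card = d ∧ IncOn π s)).card := by
  rw [Nat.card_congr (subseqEquiv π d), Nat.card_eq_fintype_card, Fintype.card_subtype]

end Aux5

theorem stmt_15 (n : ℕ) (π : Fin n → Fin n) (hbij : Function.Bijective π)
    (havoid : Avoids π ![1,3,2]) :
    (Nat.card {i : Fin n // ∀ j, i < j → π j < π i} : ℤ) =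
      ∑ d ∈ Finset.Icc 1 n, (-1)^(d+1) *
        (Nat.card {f : Fin d → Fin n // StrictMono f ∧ StrictMono (π ∘ f)} : ℤ) := by
  have hinj := hbij.injective
  set A : Finset (Finset (Fin n)) :=
    Finset.univ.filter (fun s => s.Nonempty ∧ IncOn π s) with hA
  have h1 : ∀ d ∈ Finset.Icc 1 n,
      (-1:ℤ)^(d+1) * (Nat.card {f : Fin d → Fin n // StrictMono f ∧ StrictMono (π ∘ f)} : ℤ)
      = ∑ s ∈ A.filter (fun s => s.card = d), (-1:ℤ)^(s.card+1) := by
    intro d hd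
    have hd1 : 1 ≤ d := (Finset.mem_Icc.mp hd).1
    rw [card_subseq]
    have hfe : Finset.univ.filter (fun s : Finset (Fin n) => s.card = d ∧ IncOn π s)
        = A.filter (fun s => s.card = d) := by
      ext s
      simp only [hA, Finset.mem_filter, Finset.mem_univ, true_and]
      constructor
      · rintro ⟨hc, hi⟩
        exact ⟨⟨Finset.card_pos.mp (by omega), hi⟩, hc⟩
      · rintro ⟨⟨-, hi⟩, hc⟩
        exact ⟨hc, hi⟩
    calc (-1:ℤ)^(d+1) *
          ((Finset.univ.filter (fun s : Finset (Fin n) => s.card = d ∧ IncOn π s)).card : ℤ)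
        = ∑ _s ∈ A.filter (fun s => s.card = d), (-1:ℤ)^(d+1) := by
          rw [Finset.sum_const, nsmul_eq_mul, hfe, mul_comm]
      _ = ∑ s ∈ A.filter (fun s => s.card = d), (-1:ℤ)^(s.card+1) :=
          Finset.sum_congr rfl (fun s hs => by rw [(Finset.mem_filter.mp hs).2])
  rw [Finset.sum_congr rfl h1]
  have hmaps : ∀ s ∈ A, s.card ∈ Finset.Icc 1 n := by
    intro s hs
    simp only [hA, Finset.mem_filter, Finset.mem_univ, true_and] at hs
    have h1' : 0 < s.card := Finset.card_pos.mpr hs.1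
    have h2' : s.card ≤ n := by simpa using Finset.card_le_univ s
    exact Finset.mem_Icc.mpr ⟨h1', h2'⟩
  rw [Finset.sum_fiberwise_of_maps_to hmaps (fun s => (-1:ℤ)^(s.card+1))]
  have hL : Nat.card {i : Fin n // ∀ j, i < j → π j < π i}
      = (Finset.univ.filter (fun i => RLMax π i)).card := by
    rw [Nat.card_eq_fintype_card, Fintype.card_subtype]
    apply congrArg Finset.card
    ext i
    simp only [Finset.mem_filter, Finset.mem_univ, true_and]
    exact Iff.rfl
  rw [hL, ← Finset.sum_filter_add_sum_filter_not A (fun s => ∃ m, RLMax π m ∧ s = {m})]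
  have hfix : ∑ s ∈ A.filter (fun s => ∃ m, RLMax π m ∧ s = {m}), (-1:ℤ)^(s.card+1)
      = ((Finset.univ.filter (fun i => RLMax π i)).card : ℤ) := by
    rw [Finset.sum_congr rfl (fun s hs => show ((-1:ℤ))^(s.card+1) = 1 from by
      obtain ⟨m, -, rfl⟩ := (Finset.mem_filter.mp hs).2
      simp)]
    rw [Finset.sum_const, nsmul_eq_mul, mul_one]
    congr 1
    refine (Finset.card_bij (fun m _ => ({m} : Finset (Fin n))) ?_ ?_ ?_).symm
    · intro m hm
      simp only [Finset.mem_filter, Finset.mem_univ, true_and] at hm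
      refine Finset.mem_filter.mpr ⟨Finset.mem_filter.mpr ⟨Finset.mem_univ _,
        Finset.singleton_nonempty m, ?_⟩, ⟨m, hm, rfl⟩⟩
      intro a ha b hb hab
      rw [Finset.mem_singleton.mp ha, Finset.mem_singleton.mp hb] at hab
      exact absurd hab (lt_irrefl _)
    · intro m1 _ m2 _ h
      exact Finset.singleton_injective h
    · intro s hs
      obtain ⟨m, hR, rfl⟩ := (Finset.mem_filter.mp hs).2
      exact ⟨m, by simp [hR], rfl⟩
  have hvan : ∑ s ∈ A.filter (fun s => ¬ ∃ m, RLMax π m ∧ s = {m}), (-1:ℤ)^(s.card+1) = 0 := by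
    have hmemT : ∀ C ∈ A.filter (fun s => ¬ ∃ m, RLMax π m ∧ s = {m}),
        C.Nonempty ∧ IncOn π C ∧ ¬ ∃ m, RLMax π m ∧ C = {m} := by
      intro C hC
      simp only [hA, Finset.mem_filter, Finset.mem_univ, true_and] at hC
      exact ⟨hC.1.1, hC.1.2, hC.2⟩
    refine Finset.sum_involution
      (fun C hC => tog hinj C (hmemT C hC).1)
      (fun C hC => tog_sign hinj (hmemT C hC).1)
      (fun C hC _ => tog_ne hinj (hmemT C hC).1)
      (fun C hC => ?_)
      (fun C hC => ?_)
    · obtain ⟨hne, hinc, hns⟩ := hmemT C hC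
      refine Finset.mem_filter.mpr ⟨Finset.mem_filter.mpr ⟨Finset.mem_univ _,
        tog_nonempty hinj havoid hne hinc hns, tog_incOn hinj havoid hne hinc⟩,
        tog_not_single hinj havoid hne hinc hns⟩
    · exact tog_tog hinj havoid (hmemT C hC).1 (hmemT C hC).2.1 (hmemT C hC).2.2 _
  rw [hfix, hvan, add_zero]
end
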